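/- arXiv:2003.14264 — 4 statements merged into one kernel-verified Lean document; each statement's English description precedes it below -/
import Mathlib

section
/- In a finite-dimensional normed vector space E ≅ ℝ^n, a Borel set A is shy if and only if A has Lebesgue measure zero. -/
open MeasureTheory

/-- A Borel set `A` is shy if there is a Borel measure, positive and finite on some
compact set, giving zero measure to every translate of `A`. -/
def IsShyBorel {E : Type*} [NormedAddCommGroup E] [NormedSpace ℝ E] [MeasurableSpace E]
    (A : Set E) : Prop :=
  MeasurableSet A ∧ ∃ μ : Measure E,
    (∃ K : Set E, IsCompact K ∧ 0 < μ K ∧ μ K < ⊤) ∧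
    ∀ v : E, μ ((fun x => v + x) '' A) = 0

/-- A set is shy if it is contained in a shy Borel set. -/
def IsShy {E : Type*} [NormedAddCommGroup E] [NormedSpace ℝ E] [MeasurableSpace E]
    (A : Set E) : Prop :=
  ∃ B : Set E, A ⊆ B ∧ IsShyBorel B

/-- In a finite-dimensional normed real vector space, a Borel set is shy if and only if
it has zero Lebesgue (Haar) measure. -/
theorem stmt2 {E : Type*} [NormedAddCommGroup E] [NormedSpace ℝ E] [FiniteDimensional ℝ E]
    [MeasurableSpace E] [BorelSpace E] (μ : Measure E) [μ.IsAddHaarMeasure]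
    (A : Set E) (hA : MeasurableSet A) :
    IsShy A ↔ μ A = 0 := by
  constructor
  · rintro ⟨B, hAB, hB, ν, ⟨K, hK, hK0, hKfin⟩, hν⟩
    -- restrict ν to K to get a finite measure
    set ν' : Measure E := ν.restrict K with hν'def
    have hν'fin : IsFiniteMeasure ν' := by
      constructor
      rw [Measure.restrict_apply_univ]
      exact hKfin
    -- the set of pairs (v, x) with x - v ∈ B
    set s : Set (E × E) := {p : E × E | p.2 - p.1 ∈ B} with hsdef
    have hs : MeasurableSet s := (measurable_snd.sub measurable_fst) hB
    -- first Fubini direction: slices in x have ν-measure 0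
    have h1 : (μ.prod ν') s = 0 := by
      rw [Measure.prod_apply hs]
      have : ∀ v : E, ν' (Prod.mk v ⁻¹' s) = 0 := by
        intro v
        have himg : Prod.mk v ⁻¹' s = (fun x => v + x) '' B := by
          ext x
          simp only [hsdef, Set.mem_preimage, Set.mem_setOf_eq, Set.image_add_left,
            Set.mem_preimage]
          rw [sub_eq_neg_add]
        rw [himg]
        exact le_antisymm ((Measure.restrict_le_self _).trans (hν v).le) zero_le
      simp [this]
    -- second Fubini direction: slices in v have μ-measure μ B
    have h2 : (μ.prod ν') s = μ B * ν K := by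
      rw [Measure.prod_apply_symm hs]
      have : ∀ x : E, μ ((fun v => (v, x)) ⁻¹' s) = μ B := by
        intro x
        have himg : (fun v => (v, x)) ⁻¹' s = (fun v => x - v) ⁻¹' B := by
          ext v; simp [hsdef]
        rw [himg]
        have : (fun v : E => x - v) = (fun v => x + v) ∘ Neg.neg := by
          ext v; simp [sub_eq_add_neg]
        rw [this, Set.preimage_comp]
        rw [Measure.measure_preimage_neg, measure_preimage_add]
      simp only [this]
      rw [lintegral_const, Measure.restrict_apply_univ]
    have hprod : μ B * ν K = 0 := by rw [← h2, h1]
    have hμB : μ B = 0 := by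
      rcases mul_eq_zero.1 hprod with h | h
      · exact h
      · exact absurd h hK0.ne'
    exact measure_mono_null hAB hμB
  · intro hμA
    refine ⟨A, subset_rfl, hA, μ, ⟨Metric.closedBall 0 1, isCompact_closedBall 0 1,
      Metric.measure_closedBall_pos μ 0 one_pos, measure_closedBall_lt_top⟩, ?_⟩
    intro v
    have : (fun x => v + x) '' A = (fun x => -v + x) ⁻¹' A := by
      rw [Set.image_add_left]
    rw [this, measure_preimage_add _ _ A]
    exact hμA
end

section
/- Let γ > 1/2, ν ∈ (0,1) with γ(1+ν) > 1 and A ∈ C^γ([0,T]; C^ν(ℝ^d;ℝ^d)). Then any solution θ ∈ C^γ([0,T];ℝ^d) of the nonlinear Young differential equation θ_t = θ_0 + ∫₀^t A(ds, θ_s) satisfies [θ]_{C^γ} ≤ C (1 + ‖A‖²_{C^γ C^ν}) and ‖θ‖_{C⁰} ≤ C (1 + |θ_0| + ‖A‖²_{C^γ C^ν}), for a constant C = C(γ, ν, T). -/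
def IsPartition {n : ℕ} (s t : ℝ) (τ : Fin (n + 1) → ℝ) : Prop :=
  Monotone τ ∧ τ 0 = s ∧ τ (Fin.last n) = t

def MeshLE {n : ℕ} (τ : Fin (n + 1) → ℝ) (δ : ℝ) : Prop :=
  ∀ i : Fin n, τ i.succ - τ i.castSucc ≤ δ

noncomputable def riemannSum {d : ℕ} (A : ℝ → (Fin d → ℝ) → Fin d → ℝ)
    (θ : ℝ → Fin d → ℝ) {n : ℕ} (τ : Fin (n + 1) → ℝ) : Fin d → ℝ :=
  ∑ i : Fin n, (A (τ i.succ) (θ (τ i.castSucc)) - A (τ i.castSucc) (θ (τ i.castSucc)))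

def IsNYIntegral {d : ℕ} (A : ℝ → (Fin d → ℝ) → Fin d → ℝ) (θ : ℝ → Fin d → ℝ)
    (s t : ℝ) (I : Fin d → ℝ) : Prop :=
  ∀ ε > (0:ℝ), ∃ δ > (0:ℝ), ∀ (n : ℕ) (τ : Fin (n + 1) → ℝ),
    IsPartition s t τ → MeshLE τ δ → ‖riemannSum A θ τ - I‖ ≤ ε

lemma sum_doubling {E : Type*} [AddCommMonoid E] (g : ℕ → E) (n : ℕ) :
    ∑ i ∈ Finset.range (2*n), g i = ∑ i ∈ Finset.range n, (g (2*i) + g (2*i+1)) := by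
  induction n with
  | zero => simp
  | succ n ih => rw [Nat.mul_succ, Finset.sum_range_succ, Finset.sum_range_succ,
      Finset.sum_range_succ, ih]; abel


lemma ratio_bound (α : ℝ) (hα : 0 ≤ α) (k : ℕ) :
    (2:ℝ)^k / ((2:ℝ)^(k+1))^α ≤ ((2:ℝ)^(1-α))^k := by
  have hexp : ((2:ℝ)^(k+1))^α = (2:ℝ)^(((k+1:ℕ):ℝ)*α) := by
    rw [← Real.rpow_natCast (2:ℝ) (k+1), ← Real.rpow_mul (by norm_num)]
  rw [hexp, ← Real.rpow_natCast (2:ℝ) k, ← Real.rpow_sub two_pos,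
    ← Real.rpow_natCast ((2:ℝ)^(1-α)) k, ← Real.rpow_mul (by norm_num)]
  apply Real.rpow_le_rpow_of_exponent_le one_le_two
  push_cast
  linarith

lemma step_bound (γ ν : ℝ) (hγ0 : 0 < γ) (hν0 : 0 < ν) (u v : ℝ) (huv : u < v)
    (k : ℕ) (NA KK : ℝ) (hNA : 0 ≤ NA) (hKK : 0 ≤ KK) :
    (2:ℝ)^k * (NA * (((v-u)/2^(k+1))^γ * (KK * ((v-u)/2^(k+1))^γ)^ν)) ≤
      NA * KK^ν * (v-u)^(γ*(1+ν)) * ((2:ℝ)^(1-γ*(1+ν)))^k := by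
  have hvu : 0 < v - u := by linarith
  have h2 : (0:ℝ) < 2^(k+1) := by positivity
  set h : ℝ := (v-u)/2^(k+1) with hhdef
  have hh0 : 0 < h := by positivity
  have key : h ^ γ * (KK * h ^ γ) ^ ν = KK^ν * h ^ (γ*(1+ν)) := by
    rw [Real.mul_rpow hKK (Real.rpow_nonneg hh0.le _),
      ← Real.rpow_mul hh0.le, show γ*(1+ν) = γ + γ*ν by ring, Real.rpow_add hh0]
    ring
  rw [key]
  have hdiv : h ^ (γ*(1+ν)) = (v-u)^(γ*(1+ν)) / ((2:ℝ)^(k+1))^(γ*(1+ν)) := by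
    rw [hhdef]; exact Real.div_rpow hvu.le h2.le _
  calc (2:ℝ)^k * (NA * (KK^ν * h^(γ*(1+ν))))
      = (NA * KK^ν * (v-u)^(γ*(1+ν))) * ((2:ℝ)^k / ((2:ℝ)^(k+1))^(γ*(1+ν))) := by
        rw [hdiv]; ring
    _ ≤ (NA * KK^ν * (v-u)^(γ*(1+ν))) * ((2:ℝ)^(1-γ*(1+ν)))^k := by
        apply mul_le_mul_of_nonneg_left (ratio_bound _ (by positivity) k) (by positivity)
    _ = NA * KK^ν * (v-u)^(γ*(1+ν)) * ((2:ℝ)^(1-γ*(1+ν)))^k := by ring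

lemma geom_tail (r : ℝ) (h0 : 0 ≤ r) (h1 : r < 1) (k : ℕ) :
    ∑ j ∈ Finset.range k, r ^ j ≤ (1 - r)⁻¹ := by
  have hs : HasSum (fun n : ℕ => r ^ n) (1 - r)⁻¹ := hasSum_geometric_of_lt_one h0 h1
  exact sum_le_hasSum _ (fun i _ => by positivity) hs

lemma sewing {d : ℕ} (γ ν T : ℝ) (hγ0 : 0 < γ) (hν0 : 0 < ν)
    (hα : 1 < γ * (1+ν))
    (A : ℝ → (Fin d → ℝ) → Fin d → ℝ) (θ : ℝ → Fin d → ℝ) (NA KK : ℝ)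
    (hNA : 0 ≤ NA) (hKK : 0 ≤ KK)
    (h4 : ∀ s ∈ Set.Icc 0 T, ∀ t ∈ Set.Icc 0 T, ∀ x y : Fin d → ℝ,
        ‖A t x - A t y - (A s x - A s y)‖ ≤ NA * |t - s| ^ γ * ‖x - y‖ ^ ν)
    (u v : ℝ) (hu : u ∈ Set.Icc 0 T) (hv : v ∈ Set.Icc 0 T) (huv : u < v)
    (hH : ∀ a b : ℝ, u ≤ a → a < b → b ≤ v → ‖θ b - θ a‖ ≤ KK * (b - a) ^ γ)
    (hI : IsNYIntegral A θ u v (θ v - θ u)) :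
    ‖θ v - θ u - (A v (θ u) - A u (θ u))‖ ≤
      (1 - (2:ℝ)^(1 - γ*(1+ν)))⁻¹ * (NA * KK^ν * (v-u)^(γ*(1+ν))) := by
  have hr0 : (0:ℝ) < (2:ℝ) ^ (1 - γ*(1+ν)) := Real.rpow_pos_of_pos two_pos _
  have hr1 : (2:ℝ) ^ (1 - γ*(1+ν)) < 1 :=
    Real.rpow_lt_one_of_one_lt_of_neg one_lt_two (by linarith)
  have hvu : 0 < v - u := by linarith
  -- the dyadic points
  set p : ℕ → ℕ → ℝ := fun k i => u + (v - u) * (i:ℝ) / 2 ^ k with hpdef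
  have hp2pos : ∀ k : ℕ, (0:ℝ) < 2 ^ k := fun k => by positivity
  have hpmono : ∀ k, ∀ i j : ℕ, i ≤ j → p k i ≤ p k j := by
    intro k i j hij
    have : (i:ℝ) ≤ j := by exact_mod_cast hij
    simp only [hpdef]
    have h2 := hp2pos k
    gcongr
  have hp0 : ∀ k, p k 0 = u := by intro k; simp [hpdef]
  have hpfull : ∀ k, p k (2^k) = v := by
    intro k; simp only [hpdef]
    push_cast
    field_simp
    ring
  have hstep : ∀ k i, p k (i+1) - p k i = (v - u) / 2 ^ k := by
    intro k i; simp only [hpdef]; push_cast; ring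
  have hsteppos : ∀ k i, p k i < p k (i+1) := by
    intro k i
    have h : 0 < p k (i+1) - p k i := by rw [hstep k i]; positivity
    exact sub_pos.mp h
  have hphalf : ∀ k i, p (k+1) (2*i) = p k i := by
    intro k i; simp only [hpdef]; push_cast
    rw [pow_succ]
    field_simp
  have hpmemuv : ∀ k, ∀ i ≤ 2^k, p k i ∈ Set.Icc u v := by
    intro k i hi
    constructor
    · rw [← hp0 k]; exact hpmono k 0 i (Nat.zero_le _)
    · rw [← hpfull k]; exact hpmono k i _ hi
  have hpmemT : ∀ k, ∀ i ≤ 2^k, p k i ∈ Set.Icc 0 T := by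
    intro k i hi
    obtain ⟨h1', h2'⟩ := hpmemuv k i hi
    exact ⟨le_trans hu.1 h1', le_trans h2' hv.2⟩
  -- the Riemann sums along dyadic partitions
  set F : ℕ → ℕ → (Fin d → ℝ) := fun k i =>
    A (p k (i+1)) (θ (p k i)) - A (p k i) (θ (p k i)) with hFdef
  set S : ℕ → (Fin d → ℝ) := fun k => ∑ i ∈ Finset.range (2^k), F k i with hSdef
  have hS0 : S 0 = A v (θ u) - A u (θ u) := by
    have h1' : p 0 1 = v := by simpa using hpfull 0
    simp [hSdef, hFdef, hp0, h1']
  -- comparison of consecutive levels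
  have hdiff : ∀ k, ‖S (k+1) - S k‖ ≤
      NA * KK^ν * (v-u)^(γ*(1+ν)) * ((2:ℝ)^(1-γ*(1+ν)))^k := by
    intro k
    have hdouble : S (k+1) = ∑ i ∈ Finset.range (2^k), (F (k+1) (2*i) + F (k+1) (2*i+1)) := by
      rw [hSdef]
      simp only
      rw [pow_succ, mul_comm ((2:ℕ)^k) 2, sum_doubling]
    have hsub : S (k+1) - S k
        = ∑ i ∈ Finset.range (2^k), (F (k+1) (2*i) + F (k+1) (2*i+1) - F k i) := by
      rw [hdouble, hSdef]
      simp only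
      rw [← Finset.sum_sub_distrib]
    rw [hsub]
    have hterm : ∀ i ∈ Finset.range (2^k),
        ‖F (k+1) (2*i) + F (k+1) (2*i+1) - F k i‖ ≤
          NA * (((v-u)/2^(k+1))^γ * (KK * ((v-u)/2^(k+1))^γ)^ν) := by
      intro i hi
      rw [Finset.mem_range] at hi
      set a := p k i with hadef
      set m := p (k+1) (2*i+1) with hmdef
      set b := p k (i+1) with hbdef
      have ha2 : p (k+1) (2*i) = a := hphalf k i
      have hb2 : p (k+1) (2*i+2) = b := by
        rw [hbdef, show 2*i+2 = 2*(i+1) by ring]; exact hphalf k (i+1)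
      have hiden : F (k+1) (2*i) + F (k+1) (2*i+1) - F k i
          = A b (θ m) - A b (θ a) - (A m (θ m) - A m (θ a)) := by
        simp only [hFdef, ha2, show 2*i+1+1 = 2*i+2 by ring, hb2]
        abel
      rw [hiden]
      have hma : m - a = (v-u)/2^(k+1) := by
        rw [hmdef, hadef, ← hphalf k i]; exact hstep (k+1) (2*i)
      have hbm : b - m = (v-u)/2^(k+1) := by
        rw [hbdef, hmdef, ← hphalf k (i+1), show 2*(i+1) = (2*i+1)+1 by ring]
        exact hstep (k+1) (2*i+1)
      have hle1 : 2*i+1 ≤ 2^(k+1) := by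
        have : i + 1 ≤ 2^k := hi
        calc 2*i+1 ≤ 2*(i+1) := by omega
          _ ≤ 2*2^k := by omega
          _ = 2^(k+1) := by rw [pow_succ]; ring
      have hle2 : 2*i+2 ≤ 2^(k+1) := by
        have : i + 1 ≤ 2^k := hi
        calc 2*i+2 = 2*(i+1) := by ring
          _ ≤ 2*2^k := by omega
          _ = 2^(k+1) := by rw [pow_succ]; ring
      have hmT : m ∈ Set.Icc 0 T := hpmemT (k+1) _ hle1
      have hbT : b ∈ Set.Icc 0 T := by
        rw [← hb2]; exact hpmemT (k+1) _ hle2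
      have hbound := h4 m hmT b hbT (θ m) (θ a)
      have habs : |b - m| = (v-u)/2^(k+1) := by
        rw [hbm]; exact abs_of_pos (by positivity)
      have hθma : ‖θ m - θ a‖ ≤ KK * ((v-u)/2^(k+1))^γ := by
        have hauv := hpmemuv k i hi.le
        have hmuv : m ∈ Set.Icc u v := by
          rw [hmdef]; exact hpmemuv (k+1) _ hle1
        have ham : a < m := by
          have h0 : 0 < m - a := by rw [hma]; positivity
          exact sub_pos.mp h0
        have := hH a m hauv.1 ham hmuv.2
        rwa [hma] at this
      calc ‖A b (θ m) - A b (θ a) - (A m (θ m) - A m (θ a))‖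
          ≤ NA * |b - m|^γ * ‖θ m - θ a‖^ν := hbound
        _ ≤ NA * ((v-u)/2^(k+1))^γ * (KK * ((v-u)/2^(k+1))^γ)^ν := by
            rw [habs]
            apply mul_le_mul_of_nonneg_left _ (by positivity)
            exact Real.rpow_le_rpow (norm_nonneg _) hθma hν0.le
        _ = NA * (((v-u)/2^(k+1))^γ * (KK * ((v-u)/2^(k+1))^γ)^ν) := by ring
    calc ‖∑ i ∈ Finset.range (2^k), (F (k+1) (2*i) + F (k+1) (2*i+1) - F k i)‖
        ≤ ∑ i ∈ Finset.range (2^k),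
            ‖F (k+1) (2*i) + F (k+1) (2*i+1) - F k i‖ := norm_sum_le _ _
      _ ≤ ∑ _i ∈ Finset.range (2^k),
            NA * (((v-u)/2^(k+1))^γ * (KK * ((v-u)/2^(k+1))^γ)^ν) :=
          Finset.sum_le_sum hterm
      _ = (2:ℝ)^k * (NA * (((v-u)/2^(k+1))^γ * (KK * ((v-u)/2^(k+1))^γ)^ν)) := by
          rw [Finset.sum_const, Finset.card_range]; push_cast; ring
      _ ≤ NA * KK^ν * (v-u)^(γ*(1+ν)) * ((2:ℝ)^(1-γ*(1+ν)))^k :=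
          step_bound γ ν hγ0 hν0 u v huv k NA KK hNA hKK
  -- telescoping and geometric series
  have htele : ∀ k, ‖S k - S 0‖ ≤
      (1 - (2:ℝ)^(1-γ*(1+ν)))⁻¹ * (NA * KK^ν * (v-u)^(γ*(1+ν))) := by
    intro k
    have h1' : ‖S k - S 0‖ ≤ ∑ j ∈ Finset.range k, ‖S (j+1) - S j‖ := by
      have h := dist_le_range_sum_dist S k
      simp only [dist_eq_norm] at h
      rw [norm_sub_rev]
      exact h.trans (le_of_eq (Finset.sum_congr rfl fun j _ => norm_sub_rev _ _))
    have h2' : ∑ j ∈ Finset.range k, ‖S (j+1) - S j‖ ≤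
        ∑ j ∈ Finset.range k, NA * KK^ν * (v-u)^(γ*(1+ν)) * ((2:ℝ)^(1-γ*(1+ν)))^j :=
      Finset.sum_le_sum fun j _ => hdiff j
    have h3' : ∑ j ∈ Finset.range k, NA * KK^ν * (v-u)^(γ*(1+ν)) * ((2:ℝ)^(1-γ*(1+ν)))^j
        = NA * KK^ν * (v-u)^(γ*(1+ν)) * ∑ j ∈ Finset.range k, ((2:ℝ)^(1-γ*(1+ν)))^j := by
      rw [Finset.mul_sum]
    have h4' : ∑ j ∈ Finset.range k, ((2:ℝ)^(1-γ*(1+ν)))^j ≤ (1 - (2:ℝ)^(1-γ*(1+ν)))⁻¹ :=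
      geom_tail _ hr0.le hr1 k
    calc ‖S k - S 0‖ ≤ NA * KK^ν * (v-u)^(γ*(1+ν))
          * ∑ j ∈ Finset.range k, ((2:ℝ)^(1-γ*(1+ν)))^j := by
          rw [← h3']; exact le_trans h1' h2'
      _ ≤ NA * KK^ν * (v-u)^(γ*(1+ν)) * (1 - (2:ℝ)^(1-γ*(1+ν)))⁻¹ := by
          apply mul_le_mul_of_nonneg_left h4' (by positivity)
      _ = (1 - (2:ℝ)^(1-γ*(1+ν)))⁻¹ * (NA * KK^ν * (v-u)^(γ*(1+ν))) := by ring
  -- identification with Riemann sums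
  have hRS : ∀ k, riemannSum A θ (fun i : Fin (2^k+1) => p k (i:ℕ)) = S k := by
    intro k
    have hSk : S k = ∑ i ∈ Finset.range (2^k), F k i := rfl
    have hF : ∀ j, F k j = A (p k (j+1)) (θ (p k j)) - A (p k j) (θ (p k j)) := fun j => rfl
    rw [riemannSum, hSk, ← Fin.sum_univ_eq_sum_range (fun i => F k i) (2^k)]
    apply Finset.sum_congr rfl
    intro i _
    rw [hF]
    simp [Fin.val_succ, Fin.coe_castSucc]
  have hpart : ∀ k, IsPartition u v (fun i : Fin (2^k+1) => p k (i:ℕ)) := by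
    intro k
    refine ⟨?_, ?_, ?_⟩
    · intro i j hij
      exact hpmono k i j (by exact_mod_cast hij)
    · simpa using hp0 k
    · simpa using hpfull k
  -- conclusion via ε-δ
  apply le_of_forall_pos_le_add
  intro ε hε
  obtain ⟨δ, hδ, hδ'⟩ := hI ε hε
  obtain ⟨n, hn⟩ := exists_nat_gt ((v-u)/δ)
  have hmesh : (v-u)/2^n ≤ δ := by
    have h2n : (n:ℝ) < (2:ℝ)^n := by
      exact_mod_cast (Nat.lt_two_pow_self (n := n))
    have : (v-u)/δ < (2:ℝ)^n := lt_trans hn h2n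
    rw [div_le_iff₀ (hp2pos n)]
    rw [div_lt_iff₀ hδ] at this
    nlinarith [hp2pos n, hδ]
  have hmesh' : MeshLE (fun i : Fin (2^n+1) => p n (i:ℕ)) δ := by
    intro i
    have : p n ((i:ℕ)+1) - p n (i:ℕ) = (v-u)/2^n := hstep n i
    simp only [Fin.val_succ, Fin.coe_castSucc]
    rw [this]
    exact hmesh
  have happ := hδ' (2^n) _ (hpart n) hmesh'
  rw [hRS n] at happ
  calc ‖θ v - θ u - (A v (θ u) - A u (θ u))‖
      ≤ ‖θ v - θ u - S n‖ + ‖S n - (A v (θ u) - A u (θ u))‖ := by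
        have : θ v - θ u - (A v (θ u) - A u (θ u))
            = (θ v - θ u - S n) + (S n - (A v (θ u) - A u (θ u))) := by abel
        rw [this]; exact norm_add_le _ _
    _ ≤ ε + (1 - (2:ℝ)^(1-γ*(1+ν)))⁻¹ * (NA * KK^ν * (v-u)^(γ*(1+ν))) := by
        apply add_le_add
        · rw [norm_sub_rev]; exact happ
        · rw [← hS0]; exact htele n
    _ = (1 - (2:ℝ)^(1-γ*(1+ν)))⁻¹ * (NA * KK^ν * (v-u)^(γ*(1+ν))) + ε := by ring

lemma rpow_subadd (a b p : ℝ) (ha : 0 ≤ a) (hb : 0 ≤ b) (hp0 : 0 ≤ p) (hp1 : p ≤ 1) :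
    (a+b)^p ≤ a^p + b^p := by
  have h := NNReal.rpow_add_le_add_rpow a.toNNReal b.toNNReal hp0 hp1
  have h2 := (Real.toNNReal_add ha hb) ▸ h
  rw [← NNReal.coe_le_coe] at h2
  push_cast [NNReal.coe_rpow, Real.coe_toNNReal a ha, Real.coe_toNNReal b hb] at h2
  convert h2 using 2
  rw [Real.coe_toNNReal _ (by positivity)]

lemma rpow_le_add_one (x p : ℝ) (hx : 0 ≤ x) (hp0 : 0 ≤ p) (hp1 : p ≤ 1) :
    x ^ p ≤ x + 1 := by
  rcases le_or_gt x 1 with h | h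
  · have : x ^ p ≤ 1 := Real.rpow_le_one hx h hp0
    linarith
  · have : x ^ p ≤ x ^ (1:ℝ) := Real.rpow_le_rpow_of_exponent_le h.le hp1
    rw [Real.rpow_one] at this
    linarith


set_option maxHeartbeats 2000000 in
/-- A priori estimates for solutions of the nonlinear Young differential equation
`θ_t = θ_0 + ∫₀^t A(ds, θ_s)` with `A ∈ C^γ_t C^ν_x`, `γ > 1/2`, `γ(1+ν) > 1`:
any `C^γ` solution satisfies `[θ]_{C^γ} ≤ C (1 + ‖A‖²_{C^γ C^ν})` and
`‖θ‖_{C⁰} ≤ C (1 + |θ_0| + ‖A‖²_{C^γ C^ν})` with `C = C(γ,ν,T)`.  Here `NA` is a bound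
for the norm `‖A‖_{C^γ C^ν}` (sup, spatial Hölder, temporal Hölder and joint parts). -/
theorem stmt11 (γ ν T : ℝ) (hγ : 1/2 < γ) (hγ1 : γ ≤ 1) (hν : ν ∈ Set.Ioo (0:ℝ) 1)
    (h1 : 1 < γ * (1 + ν)) (hT : 0 < T) :
    ∃ C : ℝ, 0 < C ∧
      ∀ (d : ℕ) (A : ℝ → (Fin d → ℝ) → Fin d → ℝ) (θ : ℝ → Fin d → ℝ) (NA : ℝ),
      (∀ t ∈ Set.Icc 0 T, ∀ x : Fin d → ℝ, ‖A t x‖ ≤ NA) →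
      (∀ t ∈ Set.Icc 0 T, ∀ x y : Fin d → ℝ, ‖A t x - A t y‖ ≤ NA * ‖x - y‖ ^ ν) →
      (∀ s ∈ Set.Icc 0 T, ∀ t ∈ Set.Icc 0 T, ∀ x : Fin d → ℝ,
        ‖A t x - A s x‖ ≤ NA * |t - s| ^ γ) →
      (∀ s ∈ Set.Icc 0 T, ∀ t ∈ Set.Icc 0 T, ∀ x y : Fin d → ℝ,
        ‖A t x - A t y - (A s x - A s y)‖ ≤ NA * |t - s| ^ γ * ‖x - y‖ ^ ν) →
      (∃ K : ℝ, ∀ s ∈ Set.Icc 0 T, ∀ t ∈ Set.Icc 0 T, ‖θ t - θ s‖ ≤ K * |t - s| ^ γ) →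
      (∀ s ∈ Set.Icc 0 T, ∀ t ∈ Set.Icc 0 T, s ≤ t → IsNYIntegral A θ s t (θ t - θ s)) →
      (∀ s ∈ Set.Icc 0 T, ∀ t ∈ Set.Icc 0 T,
        ‖θ t - θ s‖ ≤ C * (1 + NA ^ 2) * |t - s| ^ γ) ∧
      (∀ t ∈ Set.Icc 0 T, ‖θ t‖ ≤ C * (1 + ‖θ 0‖ + NA ^ 2)) := by
  obtain ⟨hν0, hν1⟩ := hν
  have hγ0 : 0 < γ := by linarith
  have hγν : 0 < γ * ν := by positivity
  set csew : ℝ := (1 - (2:ℝ)^(1-γ*(1+ν)))⁻¹ with hcsewdef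
  have hr1 : (2:ℝ)^(1-γ*(1+ν)) < 1 :=
    Real.rpow_lt_one_of_one_lt_of_neg one_lt_two (by linarith)
  have hr0 : (0:ℝ) < (2:ℝ)^(1-γ*(1+ν)) := Real.rpow_pos_of_pos two_pos _
  have hcsew0 : 0 < csew := inv_pos.mpr (by linarith)
  set β : ℝ := (1-γ)/(γ*ν) with hβdef
  have hβ0 : 0 ≤ β := div_nonneg (by linarith) hγν.le
  have hβ1 : β ≤ 1 := by
    rw [hβdef, div_le_one hγν]
    nlinarith
  set c3 : ℝ := 2 + T^((1:ℝ)-γ) * (2*csew)^β with hc3def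
  have hc30 : 0 < c3 := by positivity
  set C : ℝ := (4*c3) * (1 + T^γ) + 1 with hCdef
  have hC0 : 0 < C := by positivity
  refine ⟨C, hC0, ?_⟩
  intro d A θ NA h0A h2A h3A h4A hKex hInt
  have hNA : 0 ≤ NA := le_trans (norm_nonneg (A 0 0)) (h0A 0 ⟨le_refl 0, hT.le⟩ 0)
  set M : ℝ := (2*csew*(NA+1))^(1/(γ*ν)) with hMdef
  have hM0 : 0 < M := Real.rpow_pos_of_pos (by positivity) _
  set l : ℝ := min T M⁻¹ with hldef
  have hl0 : 0 < l := lt_min hT (inv_pos.mpr hM0)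
  have hlM : l^(γ*ν) ≤ (2*csew*(NA+1))⁻¹ := by
    have ha : l^(γ*ν) ≤ (M⁻¹)^(γ*ν) :=
      Real.rpow_le_rpow hl0.le (min_le_right _ _) hγν.le
    have hb : (M⁻¹)^(γ*ν) = (M^(γ*ν))⁻¹ := Real.inv_rpow hM0.le _
    have hc : M^(γ*ν) = 2*csew*(NA+1) := by
      rw [hMdef, ← Real.rpow_mul (by positivity), one_div, inv_mul_cancel₀ hγν.ne',
        Real.rpow_one]
    rw [hb, hc] at ha
    exact ha
  have hlhalf : csew * NA * l^(γ*ν) ≤ 1/2 := by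
    have hd0 : (0:ℝ) < 2*csew*(NA+1) := by positivity
    calc csew * NA * l^(γ*ν) ≤ csew * NA * (2*csew*(NA+1))⁻¹ := by
          apply mul_le_mul_of_nonneg_left hlM (by positivity)
      _ = (csew * NA) / (2*csew*(NA+1)) := by rw [div_eq_mul_inv]
      _ ≤ 1/2 := by
          rw [div_le_iff₀ hd0]
          nlinarith
  obtain ⟨K, hK⟩ := hKex
  set SS : Set ℝ := insert 0 {r : ℝ | ∃ s t : ℝ, s ∈ Set.Icc 0 T ∧ t ∈ Set.Icc 0 T ∧
      s < t ∧ t - s ≤ l ∧ r = ‖θ t - θ s‖ / (t-s)^γ} with hSSdef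
  have hSSne : SS.Nonempty := ⟨0, Set.mem_insert _ _⟩
  have hSSbdd : BddAbove SS := by
    refine ⟨max K 0, ?_⟩
    rintro r (rfl | ⟨s, t, hs, ht, hst, hstl, rfl⟩)
    · exact le_max_right _ _
    · have hpow : 0 < (t-s)^γ := Real.rpow_pos_of_pos (by linarith) _
      have hh := hK s hs t ht
      rw [abs_of_pos (by linarith : (0:ℝ) < t - s)] at hh
      refine le_max_of_le_left ?_
      rw [div_le_iff₀ hpow]
      exact hh
  set Kl : ℝ := sSup SS with hKldef
  have hKl0 : 0 ≤ Kl := le_csSup hSSbdd (Set.mem_insert _ _)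
  have hKlH : ∀ s t : ℝ, s ∈ Set.Icc 0 T → t ∈ Set.Icc 0 T → s < t → t - s ≤ l →
      ‖θ t - θ s‖ ≤ Kl * (t-s)^γ := by
    intro s t hs ht hst hstl
    have hpow : 0 < (t-s)^γ := Real.rpow_pos_of_pos (by linarith) _
    have hmem : ‖θ t - θ s‖/(t-s)^γ ∈ SS :=
      Set.mem_insert_of_mem _ ⟨s, t, hs, ht, hst, hstl, rfl⟩
    have hh := le_csSup hSSbdd hmem
    rw [div_le_iff₀ hpow] at hh
    exact hh
  -- local Hölder estimate via sewing
  have hloc : ∀ u v : ℝ, u ∈ Set.Icc 0 T → v ∈ Set.Icc 0 T → u < v → v - u ≤ l →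
      ‖θ v - θ u‖ ≤ (NA + csew*NA*l^(γ*ν)*Kl^ν) * (v-u)^γ := by
    intro u v hu hv huv hvl
    have hvu : 0 < v - u := by linarith
    have hH : ∀ a b : ℝ, u ≤ a → a < b → b ≤ v → ‖θ b - θ a‖ ≤ Kl * (b - a) ^ γ := by
      intro a b hua hab hbv
      exact hKlH a b ⟨le_trans hu.1 hua, le_trans (le_trans hab.le hbv) hv.2⟩
        ⟨le_trans hu.1 (le_trans hua hab.le), le_trans hbv hv.2⟩ hab (by linarith)
    have hsew := sewing γ ν T hγ0 hν0 h1 A θ NA Kl hNA hKl0 h4A u v hu hv huv hH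
      (hInt u hu v hv huv.le)
    rw [← hcsewdef] at hsew
    have hA : ‖A v (θ u) - A u (θ u)‖ ≤ NA * (v-u)^γ := by
      have hh := h3A u hu v hv (θ u)
      rwa [abs_of_pos hvu] at hh
    have hsplit : (v-u)^(γ*(1+ν)) = (v-u)^γ * (v-u)^(γ*ν) := by
      rw [← Real.rpow_add hvu]; ring_nf
    have hlν : (v-u)^(γ*ν) ≤ l^(γ*ν) := Real.rpow_le_rpow hvu.le hvl hγν.le
    calc ‖θ v - θ u‖
        ≤ ‖A v (θ u) - A u (θ u)‖ + ‖θ v - θ u - (A v (θ u) - A u (θ u))‖ :=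
          norm_le_norm_add_norm_sub' _ _
      _ ≤ NA*(v-u)^γ + csew * (NA*Kl^ν*(v-u)^(γ*(1+ν))) := add_le_add hA hsew
      _ = NA*(v-u)^γ + csew*NA*Kl^ν*((v-u)^γ*(v-u)^(γ*ν)) := by rw [hsplit]; ring
      _ ≤ NA*(v-u)^γ + csew*NA*Kl^ν*((v-u)^γ*l^(γ*ν)) := by
          apply add_le_add_right
          apply mul_le_mul_of_nonneg_left _ (by positivity)
          exact mul_le_mul_of_nonneg_left hlν (by positivity)
      _ = (NA + csew*NA*l^(γ*ν)*Kl^ν)*(v-u)^γ := by ring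
  -- bound on the local Hölder seminorm
  have hKlle : Kl ≤ NA + csew*NA*l^(γ*ν)*Kl^ν := by
    apply csSup_le hSSne
    rintro r (rfl | ⟨s, t, hs, ht, hst, hstl, rfl⟩)
    · positivity
    · rw [div_le_iff₀ (Real.rpow_pos_of_pos (by linarith) _)]
      exact hloc s t hs ht hst hstl
  have hKlν : Kl^ν ≤ Kl + 1 := rpow_le_add_one Kl ν hKl0 hν0.le hν1.le
  have hKl2 : Kl ≤ 2*NA + 1 := by
    have h5 : csew*NA*l^(γ*ν)*Kl^ν ≤ (1/2)*(Kl+1) := by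
      calc csew*NA*l^(γ*ν)*Kl^ν ≤ csew*NA*l^(γ*ν)*(Kl+1) := by
            apply mul_le_mul_of_nonneg_left hKlν
            have : (0:ℝ) ≤ l^(γ*ν) := Real.rpow_nonneg hl0.le _
            positivity
        _ ≤ (1/2)*(Kl+1) := mul_le_mul_of_nonneg_right hlhalf (by linarith)
    linarith
  -- global Hölder estimate by chaining
  have hglob : ∀ s t : ℝ, s ∈ Set.Icc 0 T → t ∈ Set.Icc 0 T → s < t →
      ‖θ t - θ s‖ ≤ (4*c3)*(1+NA^2) * (t-s)^γ := by
    intro s t hs ht hst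
    have hts : 0 < t - s := by linarith
    set N : ℕ := ⌈(t-s)/l⌉₊ with hNdef
    have hN1 : 1 ≤ N := Nat.one_le_ceil_iff.mpr (by positivity)
    have hNpos : (0:ℝ) < (N:ℝ) := by exact_mod_cast hN1
    set hh : ℝ := (t-s)/(N:ℝ) with hhdef
    have hh0 : 0 < hh := by positivity
    have hhl : hh ≤ l := by
      rw [hhdef, div_le_iff₀ hNpos]
      have h5 := Nat.le_ceil ((t-s)/l)
      rw [div_le_iff₀ hl0] at h5
      calc t - s ≤ (⌈(t-s)/l⌉₊ : ℝ) * l := h5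
        _ = l * (N:ℝ) := by rw [hNdef]; ring
    set q : ℕ → ℝ := fun i => s + (i:ℝ)*hh with hqdef
    have hq0 : q 0 = s := by simp [hqdef]
    have hqN : q N = t := by
      have hNne : (N:ℝ) ≠ 0 := hNpos.ne'
      simp only [hqdef, hhdef]
      field_simp
      ring
    have hqstep : ∀ i : ℕ, q (i+1) - q i = hh := by
      intro i; simp only [hqdef]; push_cast; ring
    have hqmono : ∀ i j : ℕ, i ≤ j → q i ≤ q j := by
      intro i j hij
      simp only [hqdef]
      have hij' : (i:ℝ) ≤ (j:ℝ) := by exact_mod_cast hij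
      have := mul_le_mul_of_nonneg_right hij' hh0.le
      linarith
    have hqmem : ∀ i ≤ N, q i ∈ Set.Icc 0 T := by
      intro i hi
      constructor
      · have : s ≤ q i := by rw [← hq0]; exact hqmono 0 i (Nat.zero_le _)
        linarith [hs.1]
      · have : q i ≤ t := by rw [← hqN]; exact hqmono i N hi
        linarith [ht.2]
    have htele : θ t - θ s = ∑ i ∈ Finset.range N, (θ (q (i+1)) - θ (q i)) := by
      rw [Finset.sum_range_sub (fun i => θ (q i)) N, hq0, hqN]
    have hsum : ‖θ t - θ s‖ ≤ (N:ℝ) * (Kl * hh^γ) := by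
      rw [htele]
      calc ‖∑ i ∈ Finset.range N, (θ (q (i+1)) - θ (q i))‖
          ≤ ∑ i ∈ Finset.range N, ‖θ (q (i+1)) - θ (q i)‖ := norm_sum_le _ _
        _ ≤ ∑ _i ∈ Finset.range N, Kl * hh^γ := by
            apply Finset.sum_le_sum
            intro i hi
            rw [Finset.mem_range] at hi
            have h6 := hKlH (q i) (q (i+1)) (hqmem i hi.le) (hqmem (i+1) hi)
              (by have := hqstep i; linarith) (by rw [hqstep i]; exact hhl)
            rwa [hqstep i] at h6
        _ = (N:ℝ) * (Kl * hh^γ) := by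
            rw [Finset.sum_const, Finset.card_range, nsmul_eq_mul]
    have hNh : (N:ℝ) * (Kl * hh^γ) = Kl * ((N:ℝ)^((1:ℝ)-γ) * (t-s)^γ) := by
      rw [hhdef, Real.div_rpow hts.le hNpos.le, Real.rpow_sub hNpos, Real.rpow_one]
      have hNγ : (0:ℝ) < (N:ℝ)^γ := Real.rpow_pos_of_pos hNpos _
      field_simp
    have hNb : (N:ℝ) ≤ 2 + T*M := by
      have h5 : (N:ℝ) < (t-s)/l + 1 := by
        rw [hNdef]
        exact Nat.ceil_lt_add_one (by positivity)
      have h6 : (t-s)/l ≤ T/l := by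
        apply div_le_div_of_nonneg_right _ hl0.le
        linarith [hs.1, ht.2]
      have h7 : l⁻¹ ≤ T⁻¹ + M := by
        rcases min_choice T M⁻¹ with hmin | hmin
        · rw [hldef, hmin]; linarith [hM0.le]
        · rw [hldef, hmin, inv_inv]
          have : (0:ℝ) ≤ T⁻¹ := by positivity
          linarith
      have h8 : T/l ≤ 1 + T*M := by
        rw [div_eq_mul_inv]
        calc T * l⁻¹ ≤ T * (T⁻¹ + M) := mul_le_mul_of_nonneg_left h7 hT.le
          _ = 1 + T*M := by field_simp
      linarith
    have hNexp : (N:ℝ)^((1:ℝ)-γ) ≤ c3 * (NA+1) := by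
      have h8 : (N:ℝ)^((1:ℝ)-γ) ≤ (2 + T*M)^((1:ℝ)-γ) :=
        Real.rpow_le_rpow hNpos.le hNb (by linarith)
      have h9 : ((2:ℝ) + T*M)^((1:ℝ)-γ) ≤ (2:ℝ)^((1:ℝ)-γ) + (T*M)^((1:ℝ)-γ) :=
        rpow_subadd 2 (T*M) ((1:ℝ)-γ) (by norm_num) (by positivity) (by linarith) (by linarith)
      have h10 : (2:ℝ)^((1:ℝ)-γ) ≤ 2 := by
        have h := Real.rpow_le_rpow_of_exponent_le one_le_two (by linarith : (1:ℝ)-γ ≤ 1)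
        rwa [Real.rpow_one] at h
      have h11 : (T*M)^((1:ℝ)-γ) = T^((1:ℝ)-γ) * M^((1:ℝ)-γ) := Real.mul_rpow hT.le hM0.le
      have h12 : M^((1:ℝ)-γ) = (2*csew*(NA+1))^β := by
        rw [hMdef, ← Real.rpow_mul (by positivity)]
        congr 1
        rw [hβdef]
        field_simp
      have h13 : (2*csew*(NA+1))^β ≤ (2*csew)^β * (NA+1) := by
        rw [show (2:ℝ)*csew*(NA+1) = (2*csew)*(NA+1) by ring,
          Real.mul_rpow (by positivity) (by positivity)]
        apply mul_le_mul_of_nonneg_left _ (by positivity)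
        calc (NA+1)^β ≤ (NA+1)^(1:ℝ) :=
              Real.rpow_le_rpow_of_exponent_le (by linarith) hβ1
          _ = NA+1 := Real.rpow_one _
      have h14 : (N:ℝ)^((1:ℝ)-γ) ≤ 2 + T^((1:ℝ)-γ) * ((2*csew)^β * (NA+1)) := by
        have := h8.trans h9
        have h15 : (T*M)^((1:ℝ)-γ) ≤ T^((1:ℝ)-γ) * ((2*csew)^β * (NA+1)) := by
          rw [h11, h12]
          exact mul_le_mul_of_nonneg_left h13 (by positivity)
        linarith
      have h16 : (0:ℝ) ≤ T^((1:ℝ)-γ) * (2*csew)^β := by positivity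
      rw [hc3def]
      nlinarith
    calc ‖θ t - θ s‖ ≤ (N:ℝ)*(Kl*hh^γ) := hsum
      _ = Kl * ((N:ℝ)^((1:ℝ)-γ) * (t-s)^γ) := hNh
      _ ≤ (2*NA+1) * ((c3*(NA+1)) * (t-s)^γ) := by
          have hrp : (0:ℝ) ≤ (t-s)^γ := Real.rpow_nonneg hts.le _
          have hmid : (N:ℝ)^((1:ℝ)-γ) * (t-s)^γ ≤ (c3*(NA+1)) * (t-s)^γ :=
            mul_le_mul_of_nonneg_right hNexp hrp
          apply mul_le_mul hKl2 hmid (by positivity) (by linarith)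
      _ ≤ (4*c3)*(1+NA^2)*(t-s)^γ := by
          have hrp : (0:ℝ) ≤ (t-s)^γ := Real.rpow_nonneg hts.le _
          have hkey : (2*NA+1) * (c3*(NA+1)) ≤ (4*c3)*(1+NA^2) := by nlinarith [mul_nonneg hc30.le (sq_nonneg (NA - 1)), mul_nonneg hc30.le hNA, hc30.le]
          nlinarith [mul_le_mul_of_nonneg_right hkey hrp]
  -- conclusions
  have hCge : (4:ℝ)*c3 ≤ C := by
    rw [hCdef]
    have : (0:ℝ) ≤ T^γ := Real.rpow_nonneg hT.le _
    nlinarith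
  constructor
  · intro s hs t ht
    rcases lt_trichotomy s t with hlt | heq | hgt
    · have h5 := hglob s t hs ht hlt
      rw [abs_of_pos (by linarith : (0:ℝ) < t - s)]
      have hrp : (0:ℝ) ≤ (t-s)^γ := Real.rpow_nonneg (by linarith) _
      calc ‖θ t - θ s‖ ≤ (4*c3)*(1+NA^2)*(t-s)^γ := h5
        _ ≤ C*(1+NA^2)*(t-s)^γ := by
            apply mul_le_mul_of_nonneg_right _ hrp
            apply mul_le_mul_of_nonneg_right hCge (by positivity)
    · subst heq
      simp [Real.zero_rpow hγ0.ne']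
    · have h5 := hglob t s ht hs hgt
      rw [← norm_neg, neg_sub] at h5
      rw [abs_of_neg (by linarith : t - s < 0)]
      have hrp : (0:ℝ) ≤ (s-t)^γ := Real.rpow_nonneg (by linarith) _
      calc ‖θ t - θ s‖ ≤ (4*c3)*(1+NA^2)*(s-t)^γ := h5
        _ ≤ C*(1+NA^2)*(-(t-s))^γ := by
            rw [show -(t-s) = s - t by ring]
            apply mul_le_mul_of_nonneg_right _ hrp
            apply mul_le_mul_of_nonneg_right hCge (by positivity)
  · intro t ht
    have hθ0 : (0:ℝ) ≤ ‖θ 0‖ := norm_nonneg _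
    have hNA2 : (0:ℝ) ≤ NA^2 := sq_nonneg _
    have hC1 : (1:ℝ) ≤ C := by
      rw [hCdef]
      have h6 : (0:ℝ) ≤ T^γ := Real.rpow_nonneg hT.le _
      nlinarith
    rcases eq_or_lt_of_le ht.1 with heq | hlt
    · rw [← heq]
      nlinarith
    · have h5 := hglob 0 t ⟨le_refl 0, hT.le⟩ ht hlt
      have h6 : (t-0)^γ ≤ T^γ := Real.rpow_le_rpow (by linarith) (by linarith [ht.2]) hγ0.le
      have h7 : ‖θ t‖ ≤ ‖θ 0‖ + ‖θ t - θ 0‖ :=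
        norm_le_norm_add_norm_sub' _ _
      have h8 : ‖θ t - θ 0‖ ≤ (4*c3)*(1+NA^2)*T^γ := by
        calc ‖θ t - θ 0‖ ≤ (4*c3)*(1+NA^2)*(t-0)^γ := h5
          _ ≤ (4*c3)*(1+NA^2)*T^γ := by
              apply mul_le_mul_of_nonneg_left h6 (by positivity)
      have hCT : (4*c3)*T^γ ≤ C := by
        rw [hCdef]
        nlinarith [Real.rpow_nonneg hT.le γ]
      nlinarith [mul_le_mul_of_nonneg_right hCT hNA2]
end

section
/- Let α ∈ (0, 1/2), β > α, and h ∈ C^β([0,T];ℝ) with h(0) = 0. Then the function t ↦ t^α (D^α (s^{-α} h))(t), where D^α is the Riemann–Liouville fractional derivative, belongs to L²(0,T), and there is a constant C = C(α, β, T) with ‖s^α D^α s^{-α} h‖_{L²(0,T)} ≤ C ‖h‖_{C^β}. -/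
open Real MeasureTheory Set


lemma powInt {t e : ℝ} (ht : 0 < t) (he : -1 < e) :
    IntegrableOn (fun s => s ^ e) (Ioc (0:ℝ) t) ∧
    ∫ s in Ioc (0:ℝ) t, s ^ e = t ^ (e+1) / (e+1) := by
  have h1 : IntervalIntegrable (fun s : ℝ => s ^ e) volume 0 t :=
    intervalIntegral.intervalIntegrable_rpow' he
  constructor
  · simpa [intervalIntegrable_iff, uIoc_of_le ht.le] using h1
  · rw [← intervalIntegral.integral_of_le ht.le, integral_rpow (Or.inl he)]
    rw [Real.zero_rpow (by linarith)]
    ring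

lemma powInt' {t e : ℝ} (ht : 0 < t) (he : -1 < e) :
    IntegrableOn (fun s => (t - s) ^ e) (Ioc (0:ℝ) t) ∧
    ∫ s in Ioc (0:ℝ) t, (t - s) ^ e = t ^ (e+1) / (e+1) := by
  have h1 : IntervalIntegrable (fun s : ℝ => s ^ e) volume 0 t :=
    intervalIntegral.intervalIntegrable_rpow' he
  have h2 : IntervalIntegrable (fun s : ℝ => (t - s) ^ e) volume 0 t := by
    have := h1.comp_sub_left t
    simpa using this.symm
  constructor
  · simpa [intervalIntegrable_iff, uIoc_of_le ht.le] using h2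
  · rw [← intervalIntegral.integral_of_le ht.le]
    have := intervalIntegral.integral_comp_sub_left (fun s : ℝ => s ^ e) t (a := 0) (b := t)
    simp only [sub_self, sub_zero] at this
    rw [this, integral_rpow (Or.inl he), Real.zero_rpow (by linarith)]
    ring

lemma keyIneq {α s t : ℝ} (hα : 0 < α) (hs : 0 < s) (hst : s ≤ t) :
    s ^ (-α) - t ^ (-α) ≤ α * s ^ (-α - 1) * (t - s) := by
  have ht : 0 < t := lt_of_lt_of_le hs hst
  have h1α : (0:ℝ) < 1 + α := by linarith
  have amgm := Real.geom_mean_le_arith_mean2_weighted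
    (by positivity : (0:ℝ) ≤ 1/(1+α)) (by positivity : (0:ℝ) ≤ α/(1+α))
    (le_of_lt (Real.rpow_pos_of_pos ht (-α)))
    (le_of_lt (by positivity : (0:ℝ) < s ^ (-α - 1) * t))
    (by field_simp)
  have hgeom : (t ^ (-α)) ^ (1/(1+α)) * (s ^ (-α - 1) * t) ^ (α/(1+α)) = s ^ (-α) := by
    rw [Real.mul_rpow (le_of_lt (by positivity : (0:ℝ) < s ^ (-α-1))) ht.le,
      ← Real.rpow_mul ht.le, ← Real.rpow_mul hs.le]
    rw [show t ^ (-α * (1/(1+α))) * (s ^ ((-α-1)*(α/(1+α))) * t ^ (α/(1+α)))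
        = t ^ (-α * (1/(1+α))) * t ^ (α/(1+α)) * s ^ ((-α-1)*(α/(1+α))) from by ring,
      ← Real.rpow_add ht]
    have e1 : -α * (1/(1+α)) + α/(1+α) = 0 := by field_simp; ring
    have e2 : (-α - 1) * (α/(1+α)) = -α := by field_simp; ring
    rw [e1, e2, Real.rpow_zero, one_mul]
  rw [hgeom] at amgm
  have hss : s ^ (-α - 1) * s = s ^ (-α) := by
    nth_rewrite 2 [← Real.rpow_one s]
    rw [← Real.rpow_add hs]; ring_nf
  have key : (1+α) * (s ^ (-α)) ≤ t ^ (-α) + α * (s ^ (-α-1) * t) := by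
    have h2 := mul_le_mul_of_nonneg_left amgm h1α.le
    calc (1+α) * s ^ (-α) ≤ (1+α) * (1/(1+α) * t^(-α) + α/(1+α) * (s^(-α-1)*t)) := h2
      _ = t ^ (-α) + α * (s ^ (-α-1) * t) := by field_simp
  nlinarith [hss]

lemma measRpowConst {X : Type*} [MeasurableSpace X] {g : X → ℝ} (hg : Measurable g) (c : ℝ) :
    Measurable (fun x => g x ^ c) := by
  have heq : (fun x => g x ^ c) = fun x =>
      if g x = 0 then (0:ℝ) ^ c
      else if 0 < g x then Real.exp (Real.log (g x) * c)
      else Real.exp (Real.log (g x) * c) * Real.cos (c * π) := by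
    funext x
    split_ifs with h1 h2
    · rw [h1]
    · exact Real.rpow_def_of_pos h2 c
    · exact Real.rpow_def_of_neg (lt_of_le_of_ne (not_lt.mp h2) h1) c
  rw [heq]
  refine Measurable.ite (hg (measurableSet_singleton 0)) measurable_const ?_
  refine Measurable.ite (measurableSet_lt measurable_const hg) ?_ ?_
  · exact Real.measurable_exp.comp ((Real.measurable_log.comp hg).mul measurable_const)
  · exact (Real.measurable_exp.comp ((Real.measurable_log.comp hg).mul measurable_const)).mul
      measurable_const

lemma measInner (α : ℝ) (h : ℝ → ℝ) (hc : Continuous h) :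
    StronglyMeasurable (fun t : ℝ =>
      ∫ s in Ioc (0:ℝ) t, (t ^ (-α) * h t - s ^ (-α) * h s) / (t - s) ^ (α + 1)) := by
  set f : ℝ × ℝ → ℝ := fun p =>
    (p.1 ^ (-α) * h p.1 - p.2 ^ (-α) * h p.2) / (p.1 - p.2) ^ (α + 1) with hf
  have hfm : Measurable f := by
    apply Measurable.div
    · exact ((measRpowConst measurable_fst (-α)).mul (hc.measurable.comp measurable_fst)).sub
        ((measRpowConst measurable_snd (-α)).mul (hc.measurable.comp measurable_snd))
    · exact measRpowConst (measurable_fst.sub measurable_snd) (α + 1)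
  set S : Set (ℝ × ℝ) := {p | 0 < p.2 ∧ p.2 ≤ p.1} with hS
  have hSm : MeasurableSet S :=
    (measurableSet_lt measurable_const measurable_snd).inter
      (measurableSet_le measurable_snd measurable_fst)
  have hFm : StronglyMeasurable (S.indicator f) :=
    ((hfm.indicator hSm)).stronglyMeasurable
  have key := hFm.integral_prod_right' (ν := (volume : Measure ℝ))
  have : (fun t : ℝ => ∫ s in Ioc (0:ℝ) t,
      (t ^ (-α) * h t - s ^ (-α) * h s) / (t - s) ^ (α + 1)) =
      fun t : ℝ => ∫ s : ℝ, S.indicator f (t, s) := by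
    funext t
    rw [← MeasureTheory.integral_indicator measurableSet_Ioc]
    have heq2 : (Ioc (0:ℝ) t).indicator
        (fun s => (t ^ (-α) * h t - s ^ (-α) * h s) / (t - s) ^ (α + 1)) =
        fun s => S.indicator f (t, s) := by
      funext s
      by_cases hs : s ∈ Ioc (0:ℝ) t
      · rw [Set.indicator_of_mem hs, Set.indicator_of_mem (by exact hs : (t, s) ∈ S)]
      · rw [Set.indicator_of_notMem hs, Set.indicator_of_notMem (by exact hs : (t, s) ∉ S)]
    rw [heq2]
  rw [this]
  exact key

lemma pointBound (α β T : ℝ) (hα0 : 0 < α) (hα2 : α < 1/2) (hβ : α < β) (hT : 0 < T)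
    (h : ℝ → ℝ) (Kh : ℝ) (hKh : 0 ≤ Kh) (h0 : h 0 = 0)
    (hHo : ∀ s ∈ Icc (0:ℝ) T, ∀ t ∈ Icc (0:ℝ) T, |h t - h s| ≤ Kh * |t - s| ^ β)
    {t : ℝ} (ht0 : 0 < t) (htT : t ≤ T) :
    |∫ s in Ioc (0:ℝ) t, (t ^ (-α) * h t - s ^ (-α) * h s) / (t - s) ^ (α + 1)|
      ≤ Kh * (t ^ (-α) * (t ^ (β - α) / (β - α))
            + α * (t/2) ^ (-α) * (t ^ (β - α) / (β - α))
            + α * ((t/2) ^ (β - α - 1) + t ^ (β - α - 1)) * (t ^ (1 - α) / (1 - α))) := by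
  set e : ℝ := β - α - 1 with he_def
  have he : (-1:ℝ) < e := by simp only [he_def]; linarith
  have hea : e + 1 = β - α := by simp only [he_def]; ring
  have hna : (-1:ℝ) < -α := by linarith
  have hht : 0 < t/2 := by linarith
  -- the dominating function
  set G : ℝ → ℝ := fun s => Kh * (t ^ (-α) * (t - s) ^ e
      + α * (t/2) ^ (-α) * s ^ e + α * ((t/2) ^ e + t ^ e) * (t - s) ^ (-α)) with hG_def
  have hint1 := powInt' ht0 he
  have hint2 := powInt ht0 he
  have hint3 := powInt' ht0 hna
  have hGint : IntegrableOn G (Ioc (0:ℝ) t) := by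
    apply Integrable.const_mul
    exact ((hint1.1.const_mul _).add (hint2.1.const_mul _)).add (hint3.1.const_mul _)
  have hGval : ∫ s in Ioc (0:ℝ) t, G s
      = Kh * (t ^ (-α) * (t ^ (β - α) / (β - α))
            + α * (t/2) ^ (-α) * (t ^ (β - α) / (β - α))
            + α * ((t/2) ^ e + t ^ e) * (t ^ (1 - α) / (1 - α))) := by
    rw [hG_def]
    rw [MeasureTheory.integral_const_mul]
    congr 1
    rw [MeasureTheory.integral_add
        (f := fun s => t ^ (-α) * (t - s) ^ e + α * (t/2) ^ (-α) * s ^ e)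
        (g := fun s => α * ((t/2) ^ e + t ^ e) * (t - s) ^ (-α))
        ((hint1.1.const_mul _).add (hint2.1.const_mul _)) (hint3.1.const_mul _),
      MeasureTheory.integral_add
        (f := fun s => t ^ (-α) * (t - s) ^ e) (g := fun s => α * (t/2) ^ (-α) * s ^ e)
        (hint1.1.const_mul _) (hint2.1.const_mul _),
      MeasureTheory.integral_const_mul, MeasureTheory.integral_const_mul,
      MeasureTheory.integral_const_mul, hint1.2, hint2.2, hint3.2, hea]
    rw [show -α + 1 = 1 - α by ring]
  -- pointwise bound
  have hbound : ∀ s ∈ Ioc (0:ℝ) t,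
      ‖(t ^ (-α) * h t - s ^ (-α) * h s) / (t - s) ^ (α + 1)‖ ≤ G s := by
    intro s hs
    obtain ⟨hs0, hst⟩ := hs
    have hGpos : 0 ≤ G s := by
      have h1 : (0:ℝ) ≤ (t - s) ^ e := Real.rpow_nonneg (by linarith) e
      have h2 : (0:ℝ) ≤ s ^ e := Real.rpow_nonneg hs0.le e
      have h3 : (0:ℝ) ≤ (t - s) ^ (-α) := Real.rpow_nonneg (by linarith) (-α)
      have h4 : (0:ℝ) ≤ (t/2) ^ e + t ^ e := by positivity
      have h5 : (0:ℝ) ≤ t ^ (-α) := Real.rpow_nonneg ht0.le _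
      have h6 : (0:ℝ) ≤ (t/2) ^ (-α) := Real.rpow_nonneg hht.le _
      rw [hG_def]
      have : 0 ≤ t ^ (-α) * (t - s) ^ e + α * (t/2) ^ (-α) * s ^ e
          + α * ((t/2) ^ e + t ^ e) * (t - s) ^ (-α) := by positivity
      positivity
    rcases eq_or_lt_of_le hst with rfl | hst'
    · simp [sub_self, Real.zero_rpow (by linarith : α + 1 ≠ 0)]
      exact hGpos
    -- now 0 < s < t
    have hts : 0 < t - s := by linarith
    have hhs : |h s| ≤ Kh * s ^ β := by
      have := hHo 0 ⟨le_refl 0, hT.le⟩ s ⟨hs0.le, le_trans hst'.le htT⟩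
      simpa [h0, abs_of_pos hs0] using this
    have hhts : |h t - h s| ≤ Kh * (t - s) ^ β := by
      have := hHo s ⟨hs0.le, le_trans hst'.le htT⟩ t ⟨ht0.le, htT⟩
      simpa [abs_of_pos hts] using this
    have hmono : t ^ (-α) ≤ s ^ (-α) :=
      Real.rpow_le_rpow_of_nonpos hs0 hst'.le (by linarith)
    have hKI := keyIneq hα0 hs0 hst'.le
    -- numerator bound
    have hnum : |t ^ (-α) * h t - s ^ (-α) * h s|
        ≤ t ^ (-α) * (Kh * (t - s) ^ β) + (α * s ^ (-α - 1) * (t - s)) * (Kh * s ^ β) := by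
      have step1 : |t ^ (-α) * h t - s ^ (-α) * h s|
          ≤ t ^ (-α) * |h t - h s| + (s ^ (-α) - t ^ (-α)) * |h s| := by
        have decomp : t ^ (-α) * h t - s ^ (-α) * h s
            = t ^ (-α) * (h t - h s) - (s ^ (-α) - t ^ (-α)) * h s := by ring
        rw [decomp]
        refine le_trans (abs_sub _ _) ?_
        rw [abs_mul, abs_mul, abs_of_nonneg (Real.rpow_nonneg ht0.le (-α)),
          abs_of_nonneg (by linarith : (0:ℝ) ≤ s ^ (-α) - t ^ (-α))]
      refine le_trans step1 (add_le_add ?_ ?_)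
      · exact mul_le_mul_of_nonneg_left hhts (Real.rpow_nonneg ht0.le _)
      · exact mul_le_mul hKI hhs (abs_nonneg _)
          (by positivity)
    -- divide
    have hden : (0:ℝ) < (t - s) ^ (α + 1) := Real.rpow_pos_of_pos hts _
    rw [Real.norm_eq_abs, abs_div, abs_of_pos hden, div_le_iff₀ hden]
    have c1 : (t - s) ^ β = (t - s) ^ e * (t - s) ^ (α + 1) := by
      rw [← Real.rpow_add hts]; congr 1; simp only [he_def]; ring
    have c2 : s ^ (-α - 1) * s ^ β = s ^ e := by
      rw [← Real.rpow_add hs0]; congr 1; simp only [he_def]; ring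
    have c3 : (t - s) ^ (-α) * (t - s) ^ (α + 1) = t - s := by
      rw [← Real.rpow_add hts]; norm_num
    have E : t ^ (-α) * (Kh * (t - s) ^ β) + (α * s ^ (-α - 1) * (t - s)) * (Kh * s ^ β)
        = Kh * (t ^ (-α) * (t - s) ^ e + α * s ^ e * (t - s) ^ (-α)) * (t - s) ^ (α + 1) := by
      linear_combination (Kh * t ^ (-α)) * c1 + (α * Kh * (t - s)) * c2
        - (α * Kh * s ^ e) * c3
    have hsplit : s ^ e * (t - s) ^ (-α)
        ≤ (t/2) ^ (-α) * s ^ e + ((t/2) ^ e + t ^ e) * (t - s) ^ (-α) := by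
      rcases le_or_gt s (t/2) with hc | hc
      · have h1 : (t - s) ^ (-α) ≤ (t/2) ^ (-α) :=
          Real.rpow_le_rpow_of_nonpos hht (by linarith) (by linarith)
        have h2 : s ^ e * (t - s) ^ (-α) ≤ s ^ e * (t/2) ^ (-α) :=
          mul_le_mul_of_nonneg_left h1 (Real.rpow_nonneg hs0.le e)
        have hpos : (0:ℝ) ≤ ((t/2) ^ e + t ^ e) * (t - s) ^ (-α) := by positivity
        linarith
      · have h2 : s ^ e ≤ (t/2) ^ e + t ^ e := by
          rcases le_or_gt 0 e with he0 | he0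
          · have h3 : s ^ e ≤ t ^ e := Real.rpow_le_rpow hs0.le hst'.le he0
            have h4 : (0:ℝ) ≤ (t/2) ^ e := Real.rpow_nonneg hht.le e
            linarith
          · have h3 : s ^ e ≤ (t/2) ^ e :=
              Real.rpow_le_rpow_of_nonpos hht hc.le he0.le
            have h4 : (0:ℝ) ≤ t ^ e := Real.rpow_nonneg ht0.le e
            linarith
        have h5 := mul_le_mul_of_nonneg_right h2
          (Real.rpow_nonneg (by linarith : (0:ℝ) ≤ t - s) (-α))
        have hpos : (0:ℝ) ≤ (t/2) ^ (-α) * s ^ e := by positivity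
        linarith
    calc |t ^ (-α) * h t - s ^ (-α) * h s|
        ≤ t ^ (-α) * (Kh * (t - s) ^ β) + (α * s ^ (-α - 1) * (t - s)) * (Kh * s ^ β) := hnum
      _ = Kh * (t ^ (-α) * (t - s) ^ e + α * s ^ e * (t - s) ^ (-α)) * (t - s) ^ (α + 1) := E
      _ ≤ G s * (t - s) ^ (α + 1) := by
          refine mul_le_mul_of_nonneg_right ?_ hden.le
          rw [hG_def]
          refine mul_le_mul_of_nonneg_left ?_ hKh
          have h6 := mul_le_mul_of_nonneg_left hsplit hα0.le
          linarith
  -- conclude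
  have hae : ∀ᵐ s ∂(volume.restrict (Ioc (0:ℝ) t)),
      ‖(t ^ (-α) * h t - s ^ (-α) * h s) / (t - s) ^ (α + 1)‖ ≤ G s :=
    MeasureTheory.ae_restrict_of_forall_mem measurableSet_Ioc hbound
  have hfin := MeasureTheory.norm_integral_le_of_norm_le hGint hae
  rw [Real.norm_eq_abs] at hfin
  calc |∫ s in Ioc (0:ℝ) t, (t ^ (-α) * h t - s ^ (-α) * h s) / (t - s) ^ (α + 1)|
      ≤ ∫ s in Ioc (0:ℝ) t, G s := hfin
    _ = _ := hGval

lemma mulBound (α β T t : ℝ) (hα0 : 0 < α) (hα2 : α < 1/2) (hβ : α < β)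
    (ht0 : 0 < t) (htT : t ≤ T) :
    α * t ^ α * (t ^ (-α) * (t ^ (β - α) / (β - α))
      + α * (t/2) ^ (-α) * (t ^ (β - α) / (β - α))
      + α * ((t/2) ^ (β - α - 1) + t ^ (β - α - 1)) * (t ^ (1 - α) / (1 - α)))
    ≤ (α/(β-α) + α^2*(2:ℝ)^α/(β-α) + α^2*(((1/2:ℝ))^(β-α-1) + 1)/(1-α)) * T ^ (β - α) := by
  have ht2 : (0:ℝ) < t/2 := by linarith
  have e1 : t ^ α * t ^ (-α) = 1 := by
    rw [← Real.rpow_add ht0]; simp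
  have e2 : t ^ α * (t/2) ^ (-α) = (2:ℝ) ^ α := by
    rw [Real.div_rpow ht0.le (by norm_num : (0:ℝ) ≤ 2)]
    rw [Real.rpow_neg (by norm_num : (0:ℝ) ≤ 2), Real.rpow_neg ht0.le]
    field_simp
  have e3 : (t/2) ^ (β - α - 1) = (1/2:ℝ) ^ (β - α - 1) * t ^ (β - α - 1) := by
    rw [show t/2 = (1/2:ℝ) * t by ring,
      Real.mul_rpow (by norm_num : (0:ℝ) ≤ (1/2:ℝ)) ht0.le]
  have e4 : t ^ α * t ^ (1 - α) = t := by
    rw [← Real.rpow_add ht0]; norm_num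
  have e5 : t ^ (β - α - 1) * t = t ^ (β - α) := by
    nth_rewrite 2 [← Real.rpow_one t]
    rw [← Real.rpow_add ht0]; congr 1; ring
  have key : α * t ^ α * (t ^ (-α) * (t ^ (β - α) / (β - α))
      + α * (t/2) ^ (-α) * (t ^ (β - α) / (β - α))
      + α * ((t/2) ^ (β - α - 1) + t ^ (β - α - 1)) * (t ^ (1 - α) / (1 - α)))
      = (α/(β-α) + α^2*(2:ℝ)^α/(β-α) + α^2*(((1/2:ℝ))^(β-α-1) + 1)/(1-α)) * t ^ (β - α) := by
    linear_combination (α * t ^ (β-α) / (β-α)) * e1 + (α^2 * t ^ (β-α) / (β-α)) * e2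
      + (α^2/(1-α)) * (((t/2) ^ (β-α-1) + t ^ (β-α-1)) * e4 + t * e3
        + ((1/2:ℝ) ^ (β-α-1) + 1) * e5)
  rw [key]
  have hDc : (0:ℝ) ≤ α/(β-α) + α^2*(2:ℝ)^α/(β-α) + α^2*(((1/2:ℝ))^(β-α-1) + 1)/(1-α) := by
    have h1 : (0:ℝ) < β - α := by linarith
    have h2 : (0:ℝ) < 1 - α := by linarith
    have h3 : (0:ℝ) ≤ (2:ℝ) ^ α := Real.rpow_nonneg (by norm_num) _
    have h4 : (0:ℝ) ≤ ((1/2:ℝ)) ^ (β-α-1) := Real.rpow_nonneg (by norm_num) _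
    positivity
  exact mul_le_mul_of_nonneg_left
    (Real.rpow_le_rpow ht0.le htT (by linarith)) hDc

/-- The weighted Riemann–Liouville fractional derivative bound: for `α ∈ (0,1/2)`,
`β > α` and `h ∈ C^β([0,T])` with `h(0) = 0`, the function
`t ↦ t^α (D^α (s^{-α} h))(t) = Γ(1-α)⁻¹ [h_t + α t^α ∫₀^t (t^{-α}h_t - s^{-α}h_s)/(t-s)^{α+1} ds]`
is square integrable on `(0,T)` with `L²` norm bounded by `C ‖h‖_{C^β}`,
`C = C(α,β,T)`.  Here `Kh` is a bound for the `C^β` norm of `h`. -/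
theorem stmt15 (α β T : ℝ) (hα : α ∈ Set.Ioo (0:ℝ) (1/2)) (hβ : α < β) (hT : 0 < T) :
    ∃ C : ℝ, 0 < C ∧
      ∀ (h : ℝ → ℝ) (Kh : ℝ), Continuous h → h 0 = 0 →
      (∀ t ∈ Set.Icc 0 T, |h t| ≤ Kh) →
      (∀ s ∈ Set.Icc 0 T, ∀ t ∈ Set.Icc 0 T, |h t - h s| ≤ Kh * |t - s| ^ β) →
      MeasureTheory.IntegrableOn
        (fun t => ((Real.Gamma (1 - α))⁻¹ *
          (h t + α * t ^ α *
            ∫ s in Set.Ioc 0 t, (t ^ (-α) * h t - s ^ (-α) * h s) / (t - s) ^ (α + 1))) ^ 2)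
        (Set.Ioc 0 T) ∧
      (∫ t in Set.Ioc 0 T, ((Real.Gamma (1 - α))⁻¹ *
          (h t + α * t ^ α *
            ∫ s in Set.Ioc 0 t, (t ^ (-α) * h t - s ^ (-α) * h s) / (t - s) ^ (α + 1))) ^ 2) ≤
        (C * Kh) ^ 2 := by
  obtain ⟨hα0, hα2⟩ := hα
  set Dc : ℝ := α/(β-α) + α^2*(2:ℝ)^α/(β-α) + α^2*(((1/2:ℝ))^(β-α-1) + 1)/(1-α) with hDc_def
  have hDc : 0 ≤ Dc := by
    have h1 : (0:ℝ) < β - α := by linarith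
    have h2 : (0:ℝ) < 1 - α := by linarith
    have h3 : (0:ℝ) ≤ (2:ℝ) ^ α := Real.rpow_nonneg (by norm_num) _
    have h4 : (0:ℝ) ≤ ((1/2:ℝ)) ^ (β-α-1) := Real.rpow_nonneg (by norm_num) _
    rw [hDc_def]; positivity
  have hΓ : 0 < Real.Gamma (1 - α) := Real.Gamma_pos_of_pos (by linarith)
  have hΓi : 0 < (Real.Gamma (1 - α))⁻¹ := inv_pos.mpr hΓ
  set M : ℝ := (Real.Gamma (1 - α))⁻¹ * (1 + Dc * T ^ (β - α)) with hM_def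
  have hM : 0 < M := by
    have : (0:ℝ) ≤ Dc * T ^ (β - α) := mul_nonneg hDc (Real.rpow_nonneg hT.le _)
    rw [hM_def]; positivity
  refine ⟨M * (1 + T), by positivity, ?_⟩
  intro h Kh hc h0 hbd hHo
  have hKh : 0 ≤ Kh := le_trans (abs_nonneg _) (hbd 0 ⟨le_refl 0, hT.le⟩)
  set g : ℝ → ℝ := fun t => (Real.Gamma (1 - α))⁻¹ *
      (h t + α * t ^ α *
        ∫ s in Set.Ioc 0 t, (t ^ (-α) * h t - s ^ (-α) * h s) / (t - s) ^ (α + 1)) with hg_def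
  -- measurability
  have hgm : StronglyMeasurable g := by
    apply StronglyMeasurable.const_mul
    exact hc.measurable.stronglyMeasurable.add
      (((measurable_const.mul (measRpowConst measurable_id α)).stronglyMeasurable).mul
        (measInner α h hc))
  -- pointwise bound
  have hgbd : ∀ t ∈ Ioc (0:ℝ) T, |g t| ≤ M * Kh := by
    intro t ht
    obtain ⟨ht0, htT⟩ := ht
    have hpb := pointBound α β T hα0 hα2 hβ hT h Kh hKh h0 hHo ht0 htT
    have hmb := mulBound α β T t hα0 hα2 hβ ht0 htT
    have htα : (0:ℝ) ≤ α * t ^ α := mul_nonneg hα0.le (Real.rpow_nonneg ht0.le _)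
    have step : |h t + α * t ^ α *
        ∫ s in Set.Ioc 0 t, (t ^ (-α) * h t - s ^ (-α) * h s) / (t - s) ^ (α + 1)|
        ≤ Kh + Kh * (Dc * T ^ (β - α)) := by
      refine le_trans (abs_add_le _ _) ?_
      have b1 : |h t| ≤ Kh := hbd t ⟨ht0.le, htT⟩
      have b2 : |α * t ^ α *
          ∫ s in Set.Ioc 0 t, (t ^ (-α) * h t - s ^ (-α) * h s) / (t - s) ^ (α + 1)|
          ≤ Kh * (Dc * T ^ (β - α)) := by
        rw [abs_mul, abs_of_nonneg htα]
        calc α * t ^ α * |∫ s in Set.Ioc 0 t,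
              (t ^ (-α) * h t - s ^ (-α) * h s) / (t - s) ^ (α + 1)|
            ≤ α * t ^ α * (Kh * (t ^ (-α) * (t ^ (β - α) / (β - α))
              + α * (t/2) ^ (-α) * (t ^ (β - α) / (β - α))
              + α * ((t/2) ^ (β - α - 1) + t ^ (β - α - 1)) * (t ^ (1 - α) / (1 - α)))) :=
              mul_le_mul_of_nonneg_left hpb htα
          _ = Kh * (α * t ^ α * (t ^ (-α) * (t ^ (β - α) / (β - α))
              + α * (t/2) ^ (-α) * (t ^ (β - α) / (β - α))
              + α * ((t/2) ^ (β - α - 1) + t ^ (β - α - 1)) * (t ^ (1 - α) / (1 - α)))) := by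
              ring
          _ ≤ Kh * (Dc * T ^ (β - α)) := by
              exact mul_le_mul_of_nonneg_left hmb hKh
      linarith
    calc |g t| = (Real.Gamma (1 - α))⁻¹ * |h t + α * t ^ α *
          ∫ s in Set.Ioc 0 t, (t ^ (-α) * h t - s ^ (-α) * h s) / (t - s) ^ (α + 1)| := by
          rw [hg_def, abs_mul, abs_of_pos hΓi]
      _ ≤ (Real.Gamma (1 - α))⁻¹ * (Kh + Kh * (Dc * T ^ (β - α))) :=
          mul_le_mul_of_nonneg_left step hΓi.le
      _ = M * Kh := by rw [hM_def]; ring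
  -- integrability
  have hconst : IntegrableOn (fun _ : ℝ => (M * Kh) ^ 2) (Ioc (0:ℝ) T) := by
    refine integrableOn_const ?_
    rw [Real.volume_Ioc]
    exact ENNReal.ofReal_ne_top
  have haebd : ∀ᵐ t ∂(volume.restrict (Ioc (0:ℝ) T)), ‖g t ^ 2‖ ≤ (M * Kh) ^ 2 := by
    refine MeasureTheory.ae_restrict_of_forall_mem measurableSet_Ioc ?_
    intro t ht
    calc ‖g t ^ 2‖ = |g t| ^ 2 := by rw [Real.norm_eq_abs, abs_pow]
      _ ≤ (M * Kh) ^ 2 := pow_le_pow_left₀ (abs_nonneg _) (hgbd t ht) 2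
  have hint : IntegrableOn (fun t => g t ^ 2) (Ioc (0:ℝ) T) := by
    exact Integrable.mono' hconst ((hgm.pow 2).aestronglyMeasurable) haebd
  refine ⟨hint, ?_⟩
  have hmono : (∫ t in Ioc (0:ℝ) T, g t ^ 2) ≤ ∫ t in Ioc (0:ℝ) T, (M * Kh) ^ 2 := by
    refine MeasureTheory.integral_mono_ae hint hconst ?_
    filter_upwards [haebd] with t ht
    calc g t ^ 2 ≤ |g t ^ 2| := le_abs_self _
      _ = ‖g t ^ 2‖ := (Real.norm_eq_abs _).symm
      _ ≤ (M * Kh) ^ 2 := ht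
  have hconst_val : (∫ t in Ioc (0:ℝ) T, (M * Kh) ^ 2 : ℝ) = T * (M * Kh) ^ 2 := by
    rw [MeasureTheory.setIntegral_const, MeasureTheory.measureReal_def, Real.volume_Ioc, smul_eq_mul, sub_zero,
      ENNReal.toReal_ofReal hT.le]
  have hfinal : T * (M * Kh) ^ 2 ≤ (M * (1 + T) * Kh) ^ 2 := by
    nlinarith [sq_nonneg (M * Kh), sq_nonneg (M * Kh * T), mul_nonneg hM.le hKh]
  calc (∫ t in Ioc (0:ℝ) T, g t ^ 2) ≤ ∫ t in Ioc (0:ℝ) T, (M * Kh) ^ 2 := hmono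
    _ = T * (M * Kh) ^ 2 := hconst_val
    _ ≤ (M * (1 + T) * Kh) ^ 2 := hfinal
end

section
/- Let Γ : Δ₂ → E be a map on the 2-simplex of [0,T] into a Banach space E with Γ_{t,t} = 0, ‖Γ‖_α < ∞ and ‖δΓ‖_β < ∞ for some 0 < α ≤ 1 < β. Then there is a unique I Γ ∈ C^α([0,T];E) with (IΓ)_0 = 0 and ‖(IΓ)_{s,t} − Γ_{s,t}‖_E ≤ C ‖δΓ‖_β |t−s|^β, C depending only on β; moreover (IΓ)_t is the limit of Riemann sums Σ_i Γ_{t_i,t_{i+1}} over partitions with mesh tending to zero, and ‖IΓ‖_{C^α} ≤ C' (‖Γ‖_α + ‖δΓ‖_β). -/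
open Finset Filter Topology

universe u

namespace SewAux

noncomputable def Cs (β : ℝ) : ℝ := (2:ℝ) ^ β * ∑' j : ℕ, ((j:ℝ)+1) ^ (-β)

lemma summable_aux {β : ℝ} (hβ : 1 < β) : Summable (fun j : ℕ => ((j:ℝ)+1) ^ (-β)) := by
  have h : Summable (fun n : ℕ => (((n:ℝ)) ^ β)⁻¹) := Real.summable_nat_rpow_inv.2 hβ
  have h2 := (summable_nat_add_iff 1).2 h
  apply h2.congr
  intro n
  rw [Real.rpow_neg (by positivity)]
  push_cast
  ring_nf

lemma Cs_pos {β : ℝ} (hβ : 1 < β) : 0 < Cs β := by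
  have h1 : (0:ℝ) < (2:ℝ) ^ β := Real.rpow_pos_of_pos (by norm_num) β
  have h2 : (0:ℝ) < ∑' j : ℕ, ((j:ℝ)+1) ^ (-β) := by
    apply Summable.tsum_pos (summable_aux hβ) (fun i => by positivity) 0
    positivity
  exact mul_pos h1 h2

lemma chain {σ : ℕ → ℝ} {n : ℕ} (h : ∀ k, k < n → σ k ≤ σ (k+1)) :
    ∀ a b, a ≤ b → b ≤ n → σ a ≤ σ b := by
  intro a b hab hbn
  induction b with
  | zero => have : a = 0 := Nat.le_zero.mp hab; simp [this]
  | succ b ih =>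
    rcases Nat.lt_or_ge a (b+1) with h1 | h1
    · exact le_trans (ih (by omega) (by omega)) (h b (by omega))
    · have : a = b+1 := by omega
      simp [this]

lemma rpow_le_mul {β x d : ℝ} (hβ : 1 ≤ β) (hx : 0 ≤ x) (hxd : x ≤ d) :
    x ^ β ≤ d ^ (β - 1) * x := by
  rcases eq_or_lt_of_le hx with h | h
  · rw [← h, Real.zero_rpow (by linarith : β ≠ 0)]
    have : (0:ℝ) ≤ d ^ (β-1) := Real.rpow_nonneg (le_trans hx hxd) _
    nlinarith
  · have e : x ^ β = x ^ (β-1) * x := by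
      have h2 := Real.rpow_add h (β-1) 1
      have h3 : (β-1)+1 = β := by ring
      rw [h3, Real.rpow_one] at h2
      exact h2
    rw [e]
    have : x ^ (β-1) ≤ d ^ (β-1) := Real.rpow_le_rpow hx hxd (by linarith)
    nlinarith [Real.rpow_nonneg hx (β-1)]

section Main

variable {E : Type u} [NormedAddCommGroup E] [NormedSpace ℝ E]
variable {β Kb T : ℝ} {Γ : ℝ → ℝ → E}

/-- Young's estimate for partition sums. -/
lemma young (hβ : 1 < β) (hKb : 0 ≤ Kb)
    (hzero : ∀ t : ℝ, Γ t t = 0)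
    (hδ : ∀ s u t : ℝ, 0 ≤ s → s ≤ u → u ≤ t → t ≤ T →
      ‖Γ s t - Γ s u - Γ u t‖ ≤ Kb * (t - s) ^ β) :
    ∀ n (σ : ℕ → ℝ), (∀ k, k < n → σ k ≤ σ (k+1)) → 0 ≤ σ 0 → σ n ≤ T →
      ‖(∑ k ∈ Finset.range n, Γ (σ k) (σ (k+1))) - Γ (σ 0) (σ n)‖ ≤
        (2:ℝ)^β * (∑ j ∈ Finset.range (n-1), ((j:ℝ)+1)^(-β)) * (Kb * (σ n - σ 0) ^ β) := by
  intro n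
  induction n using Nat.strong_induction_on with
  | _ n IH =>
  match n with
  | 0 =>
    intro σ hmono h0 hT'
    simp [hzero]
  | 1 =>
    intro σ hmono h0 hT'
    simp only [Finset.range_one, Finset.sum_singleton, sub_self, norm_zero,
      show (1:ℕ)-1 = 0 from rfl, Finset.range_zero, Finset.sum_empty, mul_zero, zero_mul]
    exact le_rfl
  | (m+2) =>
    intro σ hmono h0 hT'
    set s := σ 0 with hs
    set t := σ (m+2) with ht
    have hchain := chain hmono
    have hst : s ≤ t := hchain 0 (m+2) (by omega) le_rfl
    -- find a removable interior point
    have hex : ∃ j ≤ m, σ (j+2) - σ j ≤ 2*(t-s)/(m+1) := by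
      by_contra hc
      push_neg at hc
      have hlt : ∀ j ∈ Finset.range (m+1), 2*(t-s)/(m+1) < σ (j+2) - σ j := by
        intro j hj
        exact hc j (by simpa using Nat.lt_succ_iff.mp (Finset.mem_range.mp hj))
      have hsum := Finset.sum_lt_sum_of_nonempty (by simp : (Finset.range (m+1)).Nonempty) hlt
      have htel : ∑ j ∈ Finset.range (m+1), (σ (j+2) - σ j)
          = (σ (m+2) + σ (m+1)) - (σ 1 + σ 0) := by
        have := Finset.sum_range_sub (fun j => σ (j+1) + σ j) (m+1)
        rw [← this]
        apply Finset.sum_congr rfl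
        intro j hj
        ring_nf
      rw [htel] at hsum
      simp only [Finset.sum_const, Finset.card_range, nsmul_eq_mul] at hsum
      have h1 : σ 1 ≥ s := hchain 0 1 (by omega) (by omega)
      have h2 : σ (m+1) ≤ t := hchain (m+1) (m+2) (by omega) le_rfl
      have hm1 : (0:ℝ) < (m:ℝ)+1 := by positivity
      have : ((m:ℝ)+1) * (2*(t-s)/((m:ℝ)+1)) = 2*(t-s) := by field_simp
      push_cast at hsum
      rw [this] at hsum
      linarith
    obtain ⟨j, hjm, hjb⟩ := hex
    -- the reduced partition
    set σ' : ℕ → ℝ := fun k => if k ≤ j then σ k else σ (k+1) with hσ'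
    have hmono' : ∀ k, k < m+1 → σ' k ≤ σ' (k+1) := by
      intro k hk
      simp only [hσ']
      split_ifs with h1 h2 h3
      · exact hmono k (by omega)
      · exact hchain k (k+2) (by omega) (by omega)
      · omega
      · exact hmono (k+1) (by omega)
    have h0' : σ' 0 = s := by simp [hσ', hs]
    have hT'' : σ' (m+1) = t := by simp only [hσ', if_neg (by omega : ¬ m+1 ≤ j)]; rfl
    -- sum identity
    have hsplit : (∑ k ∈ Finset.range (m+2), Γ (σ k) (σ (k+1)))
        - (∑ k ∈ Finset.range (m+1), Γ (σ' k) (σ' (k+1)))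
        = Γ (σ j) (σ (j+1)) + Γ (σ (j+1)) (σ (j+2)) - Γ (σ j) (σ (j+2)) := by
      have e1 : (∑ k ∈ Finset.range (m+2), Γ (σ k) (σ (k+1)))
          = (∑ k ∈ Finset.Ico 0 j, Γ (σ k) (σ (k+1))) + Γ (σ j) (σ (j+1))
            + Γ (σ (j+1)) (σ (j+2)) + ∑ k ∈ Finset.Ico (j+2) (m+2), Γ (σ k) (σ (k+1)) := by
        rw [Finset.range_eq_Ico, ← Finset.sum_Ico_consecutive _ (Nat.zero_le j) (by omega : j ≤ m+2)]
        rw [Finset.sum_eq_sum_Ico_succ_bot (by omega : j < m+2)]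
        rw [Finset.sum_eq_sum_Ico_succ_bot (by omega : j+1 < m+2)]
        abel
      have e2 : (∑ k ∈ Finset.range (m+1), Γ (σ' k) (σ' (k+1)))
          = (∑ k ∈ Finset.Ico 0 j, Γ (σ k) (σ (k+1))) + Γ (σ j) (σ (j+2))
            + ∑ k ∈ Finset.Ico (j+2) (m+2), Γ (σ k) (σ (k+1)) := by
        rw [Finset.range_eq_Ico, ← Finset.sum_Ico_consecutive _ (Nat.zero_le j) (by omega : j ≤ m+1)]
        rw [Finset.sum_eq_sum_Ico_succ_bot (by omega : j < m+1)]
        have ha : ∀ k ∈ Finset.Ico 0 j, Γ (σ' k) (σ' (k+1)) = Γ (σ k) (σ (k+1)) := by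
          intro k hk
          have hk' : k < j := (Finset.mem_Ico.mp hk).2
          simp only [hσ', if_pos (by omega : k ≤ j), if_pos (by omega : k+1 ≤ j)]
        have hb : σ' j = σ j := by simp [hσ']
        have hcq : σ' (j+1) = σ (j+2) := by simp only [hσ', if_neg (by omega : ¬ j+1 ≤ j)]
        have hd : (∑ k ∈ Finset.Ico (j+1) (m+1), Γ (σ' k) (σ' (k+1)))
            = ∑ k ∈ Finset.Ico (j+2) (m+2), Γ (σ k) (σ (k+1)) := by
          rw [Finset.sum_Ico_eq_sum_range, Finset.sum_Ico_eq_sum_range]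
          have : m+1 - (j+1) = m+2 - (j+2) := by omega
          rw [this]
          apply Finset.sum_congr rfl
          intro i hi
          simp only [hσ', if_neg (by omega : ¬ j+1+i ≤ j), if_neg (by omega : ¬ j+1+i+1 ≤ j)]
          have e3 : j+1+i+1 = j+2+i := by omega
          have e4 : j+1+i+1+1 = j+2+i+1 := by omega
          rw [e3]
        rw [Finset.sum_congr rfl ha, hb, hcq, hd]
        abel
      rw [e1, e2]
      abel
    -- bound the removed term
    have hbd : ‖Γ (σ j) (σ (j+1)) + Γ (σ (j+1)) (σ (j+2)) - Γ (σ j) (σ (j+2))‖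
        ≤ (2:ℝ)^β * (((m:ℝ)+1))^(-β) * (Kb * (t-s)^β) := by
      have h1 : ‖Γ (σ j) (σ (j+2)) - Γ (σ j) (σ (j+1)) - Γ (σ (j+1)) (σ (j+2))‖
          ≤ Kb * (σ (j+2) - σ j)^β := by
        apply hδ _ _ _ (le_trans h0 (hchain 0 j (by omega) (by omega)))
          (hmono j (by omega)) (hmono (j+1) (by omega))
          (le_trans (hchain (j+2) (m+2) (by omega) le_rfl) hT')
      have h2 : Kb * (σ (j+2) - σ j)^β ≤ Kb * (2*(t-s)/((m:ℝ)+1))^β := by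
        apply mul_le_mul_of_nonneg_left _ hKb
        apply Real.rpow_le_rpow (by linarith [hmono j (by omega : j < m+2), hmono (j+1) (by omega : j+1 < m+2)]) _ (by linarith)
        exact_mod_cast hjb
      have h3 : (2*(t-s)/((m:ℝ)+1))^β = (2:ℝ)^β * (t-s)^β * (((m:ℝ)+1)^β)⁻¹ := by
        rw [Real.div_rpow (by linarith) (by positivity), Real.mul_rpow (by norm_num) (by linarith)]
        ring
      have h4 : (((m:ℝ)+1))^(-β) = (((m:ℝ)+1)^β)⁻¹ := Real.rpow_neg (by positivity) β
      rw [← norm_neg]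
      have : -(Γ (σ j) (σ (j+1)) + Γ (σ (j+1)) (σ (j+2)) - Γ (σ j) (σ (j+2)))
          = Γ (σ j) (σ (j+2)) - Γ (σ j) (σ (j+1)) - Γ (σ (j+1)) (σ (j+2)) := by abel
      rw [this]
      calc ‖_‖ ≤ Kb * (σ (j+2) - σ j)^β := h1
        _ ≤ Kb * (2*(t-s)/((m:ℝ)+1))^β := h2
        _ = (2:ℝ)^β * (((m:ℝ)+1))^(-β) * (Kb * (t-s)^β) := by rw [h3, h4]; ring
    -- apply induction hypothesis
    have hIH := IH (m+1) (by omega) σ' hmono' (by rw [h0']; exact h0) (by rw [hT'']; exact hT')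
    rw [h0', hT''] at hIH
    -- combine
    have key : ‖(∑ k ∈ Finset.range (m+2), Γ (σ k) (σ (k+1))) - Γ s t‖
        ≤ ‖Γ (σ j) (σ (j+1)) + Γ (σ (j+1)) (σ (j+2)) - Γ (σ j) (σ (j+2))‖
          + ‖(∑ k ∈ Finset.range (m+1), Γ (σ' k) (σ' (k+1))) - Γ s t‖ := by
      have : (∑ k ∈ Finset.range (m+2), Γ (σ k) (σ (k+1))) - Γ s t
          = (Γ (σ j) (σ (j+1)) + Γ (σ (j+1)) (σ (j+2)) - Γ (σ j) (σ (j+2)))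
            + ((∑ k ∈ Finset.range (m+1), Γ (σ' k) (σ' (k+1))) - Γ s t) := by
        rw [← hsplit]; abel
      rw [this]
      exact norm_add_le _ _
    have hsum_step : (∑ j' ∈ Finset.range (m+1), ((j':ℝ)+1)^(-β))
        = (∑ j' ∈ Finset.range m, ((j':ℝ)+1)^(-β)) + (((m:ℝ)+1))^(-β) := by
      rw [Finset.sum_range_succ]
    have hfin : (m+2) - 1 = m+1 := by omega
    rw [hfin, hsum_step]
    calc ‖(∑ k ∈ Finset.range (m+2), Γ (σ k) (σ (k+1))) - Γ s t‖
        ≤ (2:ℝ)^β * (((m:ℝ)+1))^(-β) * (Kb * (t-s)^β)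
          + (2:ℝ)^β * (∑ j' ∈ Finset.range ((m+1)-1), ((j':ℝ)+1)^(-β)) * (Kb * (t-s)^β) := by
          exact le_trans key (add_le_add hbd hIH)
      _ = (2:ℝ)^β * ((∑ j' ∈ Finset.range m, ((j':ℝ)+1)^(-β)) + (((m:ℝ)+1))^(-β)) * (Kb * (t-s)^β) := by
          have : (m+1) - 1 = m := by omega
          rw [this]; ring


lemma straddle (hKb : 0 ≤ Kb) (hβ' : 0 ≤ β)
    (hzero : ∀ t : ℝ, Γ t t = 0)
    (hδ : ∀ s u t : ℝ, 0 ≤ s → s ≤ u → u ≤ t → t ≤ T →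
      ‖Γ s t - Γ s u - Γ u t‖ ≤ Kb * (t - s) ^ β)
    (s t u v : ℝ) (hs : 0 ≤ s) (hst : s ≤ t) (htT : t ≤ T)
    (hu : 0 ≤ u) (huv : u ≤ v) (hvT : v ≤ T) :
    ‖Γ (min u t) (min v t) - Γ (min u s) (min v s)
      - Γ (min (max u s) t) (min (max v s) t)‖ ≤ Kb * (v - u) ^ β := by
  have hrp : (0:ℝ) ≤ Kb * (v - u) ^ β := by
    apply mul_nonneg hKb (Real.rpow_nonneg (by linarith) _)
  rcases le_total v s with h1 | h1
  · rw [min_eq_left (le_trans (le_trans huv h1) hst), min_eq_left (le_trans h1 hst),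
      min_eq_left (le_trans huv h1), min_eq_left h1,
      max_eq_right (le_trans huv h1), max_eq_right h1, min_eq_left hst]
    simpa [hzero] using hrp
  · rcases le_total s u with h2 | h2
    · rw [min_eq_right h2, min_eq_right (le_trans h2 huv),
        max_eq_left h2, max_eq_left (le_trans h2 huv)]
      simpa [hzero] using hrp
    · rw [max_eq_right h2, max_eq_left h1, min_eq_left hst]
      rcases le_total v t with h3 | h3
      · rw [min_eq_left (le_trans h2 hst), min_eq_left h3, min_eq_left h2,
          min_eq_right h1]
        exact hδ u s v hu h2 h1 (le_trans h3 htT)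
      · rw [min_eq_left (le_trans h2 hst), min_eq_right h3, min_eq_left h2,
          min_eq_right h1]
        calc ‖Γ u t - Γ u s - Γ s t‖ ≤ Kb * (t - u) ^ β :=
              hδ u s t hu h2 hst htT
          _ ≤ Kb * (v - u) ^ β := by
              apply mul_le_mul_of_nonneg_left _ hKb
              exact Real.rpow_le_rpow (by linarith) (by linarith) hβ'

lemma sum_range_two_mul {M : Type*} [AddCommMonoid M] (f : ℕ → M) (N : ℕ) :
    ∑ k ∈ Finset.range (2*N), f k = ∑ k ∈ Finset.range N, (f (2*k) + f (2*k+1)) := by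
  induction N with
  | zero => simp
  | succ N ih =>
    rw [show 2*(N+1) = 2*N+1+1 by ring, Finset.sum_range_succ, Finset.sum_range_succ,
      ih, Finset.sum_range_succ]
    abel


lemma rpow_div_geom {β T : ℝ} (hT : 0 < T) (n : ℕ) :
    (T / 2^n) ^ (β-1) = T ^ (β-1) * ((2:ℝ)^(1-β)) ^ n := by
  rw [Real.div_rpow hT.le (by positivity)]
  rw [← Real.rpow_natCast (2:ℝ) n, ← Real.rpow_natCast ((2:ℝ)^(1-β)) n]
  rw [← Real.rpow_mul (by norm_num : (0:ℝ) ≤ 2), ← Real.rpow_mul (by norm_num : (0:ℝ) ≤ 2)]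
  rw [div_eq_mul_inv, ← Real.rpow_neg (by norm_num : (0:ℝ) ≤ 2)]
  congr 1
  ring

lemma sew_exists [CompleteSpace E] (hβ : 1 < β) (hT : 0 < T) (hKb : 0 ≤ Kb)
    (hzero : ∀ t : ℝ, Γ t t = 0)
    (hδ : ∀ s u t : ℝ, 0 ≤ s → s ≤ u → u ≤ t → t ≤ T →
      ‖Γ s t - Γ s u - Γ u t‖ ≤ Kb * (t - s) ^ β) :
    ∃ I : ℝ → E, I 0 = 0 ∧ ∀ s t : ℝ, 0 ≤ s → s ≤ t → t ≤ T →
      ‖(I t - I s) - Γ s t‖ ≤ Cs β * Kb * (t - s) ^ β := by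
  classical
  set Δ : ℕ → ℝ := fun n => T / 2^n with hΔ
  have hΔpos : ∀ n, 0 < Δ n := fun n => by positivity
  set p : ℕ → ℝ → ℕ → ℝ := fun n t k => min ((k:ℝ) * Δ n) t with hp
  set D : ℕ → ℝ → E := fun n t => ∑ k ∈ Finset.range (2^n), Γ (p n t k) (p n t (k+1)) with hD
  set r : ℝ := (2:ℝ)^(1-β) with hr
  have hr0 : 0 ≤ r := (Real.rpow_pos_of_pos (by norm_num) _).le
  have hr1 : r < 1 := Real.rpow_lt_one_of_one_lt_of_neg (by norm_num) (by linarith)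
  have hΔβ : ∀ n, Δ n ^ β = Δ n ^ (β-1) * Δ n := by
    intro n
    have h2 := Real.rpow_add (hΔpos n) (β-1) 1
    have h3 : (β-1)+1 = β := by ring
    rw [h3, Real.rpow_one] at h2
    exact h2
  have hcast : ∀ n : ℕ, ((2^n : ℕ) : ℝ) = (2:ℝ)^n := by intro n; push_cast; ring
  have hΔT : ∀ n, (2:ℝ)^n * Δ n = T := by
    intro n; rw [hΔ]; field_simp
  -- basic facts about p
  have hpmono : ∀ n t, 0 ≤ t → ∀ j k, j ≤ k → p n t j ≤ p n t k := by
    intro n t ht j k hjk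
    apply min_le_min _ le_rfl
    apply mul_le_mul_of_nonneg_right (by exact_mod_cast hjk) (hΔpos n).le
  have hp0 : ∀ n t, 0 ≤ t → p n t 0 = 0 := by
    intro n t ht; simp [hp, ht]
  have hplast : ∀ n t, 0 ≤ t → t ≤ T → p n t (2^n) = t := by
    intro n t ht htT
    simp only [hp, hcast]
    rw [hΔT n]
    exact min_eq_right htT
  have hpstep : ∀ n t, 0 ≤ t → ∀ k, p n t (k+1) - p n t k ≤ Δ n := by
    intro n t ht k
    have : p n t (k+1) ≤ p n t k + Δ n := by
      simp only [hp]
      have e : ((k:ℝ)+1) * Δ n = (k:ℝ) * Δ n + Δ n := by ring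
      calc min (((k+1:ℕ):ℝ) * Δ n) t ≤ min ((k:ℝ) * Δ n + Δ n) (t + Δ n) := by
            apply min_le_min _ (by linarith [hΔpos n])
            push_cast; linarith
        _ = min ((k:ℝ) * Δ n) t + Δ n := by rw [min_add_add_right]
    linarith
  have hDdef : ∀ n t, D n t = ∑ k ∈ Finset.range (2^n), Γ (p n t k) (p n t (k+1)) :=
    fun n t => rfl
  have hpcast : ∀ n t k, p n t (k+1) = min (((k:ℝ)+1) * Δ n) t := by
    intro n t k
    simp only [hp]
    congr 2
    push_cast
    ring
  -- the refinement step bound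
  have hstep : ∀ t, 0 ≤ t → t ≤ T → ∀ n,
      ‖D (n+1) t - D n t‖ ≤ (Kb * T * T^(β-1)) * r^n := by
    intro t ht htT n
    have hpair : D (n+1) t = ∑ k ∈ Finset.range (2^n),
        (Γ (p (n+1) t (2*k)) (p (n+1) t (2*k+1))
          + Γ (p (n+1) t (2*k+1)) (p (n+1) t (2*k+1+1))) := by
      rw [hDdef, show (2:ℕ)^(n+1) = 2 * 2^n by ring,
        sum_range_two_mul (fun k => Γ (p (n+1) t k) (p (n+1) t (k+1)))]
    have hhalf : Δ (n+1) * 2 = Δ n := by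
      simp only [hΔ]
      field_simp
      ring
    have ha : ∀ k, p (n+1) t (2*k) = p n t k := by
      intro k
      simp only [hp]
      congr 1
      push_cast
      nlinarith [hhalf]
    have hb : ∀ k, p (n+1) t (2*k+1+1) = p n t (k+1) := by
      intro k
      rw [show 2*k+1+1 = 2*(k+1) by ring]
      exact ha (k+1)
    have hkey : ∀ k ∈ Finset.range (2^n),
        ‖(Γ (p (n+1) t (2*k)) (p (n+1) t (2*k+1))
          + Γ (p (n+1) t (2*k+1)) (p (n+1) t (2*k+1+1)))
          - Γ (p n t k) (p n t (k+1))‖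
          ≤ Kb * (Δ n)^(β-1) * (p n t (k+1) - p n t k) := by
      intro k hk
      rw [ha, hb]
      set a := p n t k with hadef
      set b := p n t (k+1) with hbdef
      set m := p (n+1) t (2*k+1) with hmdef
      have ham : a ≤ m := by rw [hadef, hmdef, ← ha k]; exact hpmono (n+1) t ht _ _ (by omega)
      have hmb : m ≤ b := by rw [hbdef, hmdef, ← hb k]; exact hpmono (n+1) t ht _ _ (by omega)
      have ha0 : 0 ≤ a := le_min (by positivity) ht
      have hbT : b ≤ T := le_trans (min_le_right _ _) htT
      have h1 : ‖Γ a b - Γ a m - Γ m b‖ ≤ Kb * (b - a)^β :=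
        hδ a m b ha0 ham hmb hbT
      have h2 : (b - a)^β ≤ (Δ n)^(β-1) * (b - a) := by
        apply rpow_le_mul hβ.le (by linarith [le_trans ham hmb])
        exact hpstep n t ht k
      have h3 : ‖(Γ a m + Γ m b) - Γ a b‖ = ‖Γ a b - Γ a m - Γ m b‖ := by
        rw [← norm_neg]
        congr 1
        abel
      rw [h3]
      calc ‖Γ a b - Γ a m - Γ m b‖ ≤ Kb * (b - a)^β := h1
        _ ≤ Kb * ((Δ n)^(β-1) * (b - a)) := mul_le_mul_of_nonneg_left h2 hKb
        _ = Kb * (Δ n)^(β-1) * (b - a) := by ring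
    have hsplit : D (n+1) t - D n t = ∑ k ∈ Finset.range (2^n),
        ((Γ (p (n+1) t (2*k)) (p (n+1) t (2*k+1))
          + Γ (p (n+1) t (2*k+1)) (p (n+1) t (2*k+1+1)))
          - Γ (p n t k) (p n t (k+1))) := by
      rw [Finset.sum_sub_distrib, ← hpair, ← hDdef]
    rw [hsplit]
    have htel : ∑ k ∈ Finset.range (2^n), (p n t (k+1) - p n t k) = t := by
      rw [Finset.sum_range_sub (p n t), hplast n t ht htT, hp0 n t ht, sub_zero]
    calc ‖∑ k ∈ Finset.range (2^n), _‖
        ≤ ∑ k ∈ Finset.range (2^n), (Kb * (Δ n)^(β-1) * (p n t (k+1) - p n t k)) :=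
          norm_sum_le_of_le _ hkey
      _ = Kb * (Δ n)^(β-1) * t := by rw [← Finset.mul_sum, htel]
      _ ≤ Kb * (Δ n)^(β-1) * T := by
          apply mul_le_mul_of_nonneg_left htT
          exact mul_nonneg hKb (Real.rpow_nonneg (hΔpos n).le _)
      _ = (Kb * T * T^(β-1)) * r^n := by
          rw [hΔ]
          simp only []
          rw [rpow_div_geom hT n, hr]
          ring
  -- Cauchy sequences and limit
  have hcau : ∀ t, 0 ≤ t → t ≤ T → CauchySeq (fun n => D n t) := by
    intro t ht htT
    apply cauchySeq_of_le_geometric r (Kb * T * T^(β-1)) hr1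
    intro n
    rw [dist_eq_norm, norm_sub_rev]
    exact hstep t ht htT n
  set I : ℝ → E := fun t => limUnder atTop (fun n => D n t) with hI
  have htend : ∀ t, 0 ≤ t → t ≤ T → Tendsto (fun n => D n t) atTop (𝓝 (I t)) := by
    intro t ht htT
    obtain ⟨a, ha⟩ := cauchySeq_tendsto_of_complete (hcau t ht htT)
    have : I t = a := by rw [hI]; exact ha.limUnder_eq
    rwa [this]
  refine ⟨I, ?_, ?_⟩
  · have h0 : ∀ n, D n 0 = 0 := by
      intro n
      rw [hDdef]
      apply Finset.sum_eq_zero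
      intro k hk
      have h1 : ∀ j : ℕ, p n 0 j = 0 := by
        intro j
        simp only [hp]
        exact min_eq_right (by positivity)
      rw [h1, h1, hzero]
    have : Tendsto (fun n => D n 0) atTop (𝓝 (0:E)) := by
      simp only [h0]
      exact tendsto_const_nhds
    rw [hI]
    exact this.limUnder_eq
  · intro s t hs hst htT
    have ht0 : 0 ≤ t := le_trans hs hst
    have hsT : s ≤ T := le_trans hst htT
    set ρ : ℕ → ℕ → ℝ := fun n k => min (max ((k:ℝ) * Δ n) s) t with hρ
    have hρmono : ∀ n k, ρ n k ≤ ρ n (k+1) := by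
      intro n k
      apply min_le_min _ le_rfl
      apply max_le_max _ le_rfl
      have : (k:ℝ) ≤ (k:ℝ)+1 := by linarith
      push_cast
      nlinarith [hΔpos n]
    have hρ0 : ∀ n, ρ n 0 = s := by
      intro n
      simp only [hρ]
      norm_num
      rw [max_eq_right hs]
      exact min_eq_left hst
    have hρlast : ∀ n, ρ n (2^n) = t := by
      intro n
      simp only [hρ, hcast]
      rw [hΔT n, max_eq_left hsT]
      exact min_eq_right htT
    have hyoung : ∀ n, ‖(∑ k ∈ Finset.range (2^n), Γ (ρ n k) (ρ n (k+1))) - Γ s t‖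
        ≤ Cs β * (Kb * (t-s)^β) := by
      intro n
      have h1 := young hβ hKb hzero hδ (2^n) (ρ n) (fun k _ => hρmono n k)
        (by rw [hρ0]; exact hs) (by rw [hρlast]; exact htT)
      rw [hρ0, hρlast] at h1
      refine le_trans h1 ?_
      apply mul_le_mul_of_nonneg_right _
        (mul_nonneg hKb (Real.rpow_nonneg (by linarith) _))
      rw [Cs]
      apply mul_le_mul_of_nonneg_left _ (Real.rpow_nonneg (by norm_num) β)
      exact (summable_aux hβ).sum_le_tsum _ (fun i _ => by positivity)
    have hcorr : ∀ n, ‖(D n t - D n s) - ∑ k ∈ Finset.range (2^n), Γ (ρ n k) (ρ n (k+1))‖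
        ≤ Kb * T * T^(β-1) * r^n := by
      intro n
      have e : (D n t - D n s) - ∑ k ∈ Finset.range (2^n), Γ (ρ n k) (ρ n (k+1))
          = ∑ k ∈ Finset.range (2^n),
            (Γ (p n t k) (p n t (k+1)) - Γ (p n s k) (p n s (k+1)) - Γ (ρ n k) (ρ n (k+1))) := by
        rw [hDdef, hDdef, ← Finset.sum_sub_distrib, ← Finset.sum_sub_distrib]
      rw [e]
      have hterm : ∀ k ∈ Finset.range (2^n),
          ‖Γ (p n t k) (p n t (k+1)) - Γ (p n s k) (p n s (k+1)) - Γ (ρ n k) (ρ n (k+1))‖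
            ≤ Kb * (Δ n)^β := by
        intro k hk
        have hk2 : (k:ℝ)+1 ≤ (2:ℝ)^n := by
          have : (k+1 : ℕ) ≤ 2^n := Finset.mem_range.mp hk
          calc (k:ℝ)+1 = ((k+1 : ℕ) : ℝ) := by push_cast; ring
            _ ≤ ((2^n : ℕ) : ℝ) := by exact_mod_cast this
            _ = (2:ℝ)^n := hcast n
        have hvT : ((k:ℝ)+1) * Δ n ≤ T := by
          rw [← hΔT n]
          apply mul_le_mul_of_nonneg_right hk2 (hΔpos n).le
        have hsb := straddle hKb (by linarith : (0:ℝ) ≤ β) hzero hδ s t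
          ((k:ℝ) * Δ n) (((k:ℝ)+1) * Δ n) hs hst htT
          (by positivity) (by nlinarith [hΔpos n]) hvT
        have heq : ((k:ℝ)+1) * Δ n - (k:ℝ) * Δ n = Δ n := by ring
        rw [heq] at hsb
        have hρk : ρ n k = min (max ((k:ℝ) * Δ n) s) t := rfl
        have hρk1 : ρ n (k+1) = min (max (((k:ℝ)+1) * Δ n) s) t := by
          simp only [hρ]
          congr 3
          push_cast
          ring
        rw [hpcast, hpcast, hρk, hρk1]
        exact hsb
      calc ‖∑ k ∈ Finset.range (2^n), _‖
          ≤ ∑ k ∈ Finset.range (2^n), (Kb * (Δ n)^β) := norm_sum_le_of_le _ hterm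
        _ = (2:ℝ)^n * (Kb * (Δ n)^β) := by
            rw [Finset.sum_const, Finset.card_range, nsmul_eq_mul, hcast]
        _ = Kb * ((2:ℝ)^n * Δ n) * (Δ n)^(β-1) := by rw [hΔβ n]; ring
        _ = Kb * T * (Δ n)^(β-1) := by rw [hΔT n]
        _ = Kb * T * T^(β-1) * r^n := by
            rw [hΔ]
            simp only []
            rw [rpow_div_geom hT n, hr]
            ring
    have htendsub : Tendsto (fun n => D n t - D n s) atTop (𝓝 (I t - I s)) :=
      (htend t ht0 htT).sub (htend s hs hsT)
    have hf : Tendsto (fun n => ‖(D n t - D n s) - Γ s t‖) atTop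
        (𝓝 ‖(I t - I s) - Γ s t‖) := (htendsub.sub tendsto_const_nhds).norm
    have hg : Tendsto (fun n => Cs β * (Kb * (t-s)^β) + Kb * T * T^(β-1) * r^n) atTop
        (𝓝 (Cs β * (Kb * (t-s)^β) + Kb * T * T^(β-1) * 0)) :=
      tendsto_const_nhds.add ((tendsto_pow_atTop_nhds_zero_of_lt_one hr0 hr1).const_mul _)
    have hle := le_of_tendsto_of_tendsto' hf hg (fun n => by
      calc ‖(D n t - D n s) - Γ s t‖
          ≤ ‖(D n t - D n s) - ∑ k ∈ Finset.range (2^n), Γ (ρ n k) (ρ n (k+1))‖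
            + ‖(∑ k ∈ Finset.range (2^n), Γ (ρ n k) (ρ n (k+1))) - Γ s t‖ := by
            rw [← dist_eq_norm, ← dist_eq_norm, ← dist_eq_norm]
            exact dist_triangle _ _ _
        _ ≤ Kb * T * T^(β-1) * r^n + Cs β * (Kb * (t-s)^β) :=
            add_le_add (hcorr n) (hyoung n)
        _ = Cs β * (Kb * (t-s)^β) + Kb * T * T^(β-1) * r^n := by ring)
    rw [mul_zero, add_zero] at hle
    rw [mul_assoc]
    exact hle

end Main

end SewAux

open SewAux in
/-- The Sewing Lemma: for `0 < α ≤ 1 < β` and `Γ : Δ₂ → E` with `Γ_{t,t} = 0`,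
`‖Γ_{s,t}‖ ≤ Ka (t-s)^α` and `‖δΓ_{s,u,t}‖ ≤ Kb (t-s)^β`, there is a unique
`I ∈ C^α([0,T];E)` with `I_0 = 0` and `‖I_{s,t} - Γ_{s,t}‖ ≤ C Kb (t-s)^β`, where `C`
depends only on `β` and the Hölder bound constant `C'` only on `β, T`; moreover `I_t` is
the limit of the Riemann sums `Σ_i Γ_{t_i,t_{i+1}}` along partitions of `[0,t]` with
vanishing mesh. -/
theorem stmt18 (β : ℝ) (hβ : 1 < β) :
    ∃ C : ℝ, 0 < C ∧
      ∀ (α T : ℝ), 0 < α → α ≤ 1 → 0 < T →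
      ∃ C' : ℝ, 0 < C' ∧
        ∀ (E : Type u) [NormedAddCommGroup E] [NormedSpace ℝ E] [CompleteSpace E],
        ∀ (Γ : ℝ → ℝ → E) (Ka Kb : ℝ),
        (∀ t : ℝ, Γ t t = 0) →
        (∀ s t : ℝ, 0 ≤ s → s ≤ t → t ≤ T → ‖Γ s t‖ ≤ Ka * (t - s) ^ α) →
        (∀ s u t : ℝ, 0 ≤ s → s ≤ u → u ≤ t → t ≤ T →
          ‖Γ s t - Γ s u - Γ u t‖ ≤ Kb * (t - s) ^ β) →
        ∃ I : ℝ → E,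
          I 0 = 0 ∧
          (∀ s t : ℝ, 0 ≤ s → s ≤ t → t ≤ T →
            ‖(I t - I s) - Γ s t‖ ≤ C * Kb * (t - s) ^ β) ∧
          (∀ s t : ℝ, 0 ≤ s → s ≤ t → t ≤ T →
            ‖I t - I s‖ ≤ C' * (Ka + Kb) * (t - s) ^ α) ∧
          (∀ t : ℝ, 0 ≤ t → t ≤ T → ∀ ε > (0:ℝ), ∃ δ > (0:ℝ),
            ∀ (n : ℕ) (τ : Fin (n + 1) → ℝ), IsPartition 0 t τ → MeshLE τ δ →
              ‖(∑ i : Fin n, Γ (τ i.castSucc) (τ i.succ)) - I t‖ ≤ ε) ∧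
          (∀ J : ℝ → E, J 0 = 0 →
            (∃ K : ℝ, ∀ s t : ℝ, 0 ≤ s → s ≤ t → t ≤ T →
              ‖J t - J s‖ ≤ K * (t - s) ^ α) →
            (∀ s t : ℝ, 0 ≤ s → s ≤ t → t ≤ T →
              ‖(J t - J s) - Γ s t‖ ≤ C * Kb * (t - s) ^ β) →
            ∀ t : ℝ, 0 ≤ t → t ≤ T → J t = I t) := by
  refine ⟨Cs β, Cs_pos hβ, ?_⟩
  intro α T hα hα1 hT
  refine ⟨1 + Cs β * T^(β-α), by
    have h1 := Cs_pos hβ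
    have h2 : (0:ℝ) ≤ T^(β-α) := Real.rpow_nonneg hT.le _
    nlinarith, ?_⟩
  intro E _ _ _ Γ Ka Kb hzero hΓ hδ
  have hTβ : (0:ℝ) < T^β := Real.rpow_pos_of_pos hT β
  have hTα : (0:ℝ) < T^α := Real.rpow_pos_of_pos hT α
  have hKb : 0 ≤ Kb := by
    have h1 := hδ 0 0 T le_rfl le_rfl hT.le le_rfl
    simp [hzero] at h1
    nlinarith
  have hKa : 0 ≤ Ka := by
    have h1 := hΓ 0 T le_rfl hT.le le_rfl
    have h2 : (0:ℝ) ≤ ‖Γ 0 T‖ := norm_nonneg _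
    simp at h1
    nlinarith
  obtain ⟨I, hI0, hIb⟩ := sew_exists (β := β) (Kb := Kb) (T := T) (Γ := Γ) hβ hT hKb hzero hδ
  refine ⟨I, hI0, hIb, ?_, ?_, ?_⟩
  · -- Hölder bound
    intro s t hs hst htT
    have hx : (0:ℝ) ≤ t - s := by linarith
    have hxα : (0:ℝ) ≤ (t-s)^α := Real.rpow_nonneg hx α
    have hsplit : (t-s)^β ≤ T^(β-α) * (t-s)^α := by
      rcases eq_or_lt_of_le hx with h | h
      · rw [← h, Real.zero_rpow (by linarith : β ≠ 0), Real.zero_rpow (ne_of_gt hα)]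
        simp
      · have e : (t-s)^β = (t-s)^(β-α) * (t-s)^α := by
          rw [← Real.rpow_add h]
          congr 1
          ring
        rw [e]
        apply mul_le_mul_of_nonneg_right _ hxα
        exact Real.rpow_le_rpow hx (by linarith) (by linarith)
    have h1 : ‖I t - I s‖ ≤ ‖(I t - I s) - Γ s t‖ + ‖Γ s t‖ := by
      calc ‖I t - I s‖ = ‖((I t - I s) - Γ s t) + Γ s t‖ := by congr 1; abel
        _ ≤ ‖(I t - I s) - Γ s t‖ + ‖Γ s t‖ := norm_add_le _ _
    have h2 := hIb s t hs hst htT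
    have h3 := hΓ s t hs hst htT
    have hCs : 0 < Cs β := Cs_pos hβ
    have hW : (0:ℝ) ≤ T^(β-α) := Real.rpow_nonneg hT.le _
    have h4 : Cs β * Kb * (t-s)^β ≤ Cs β * Kb * (T^(β-α) * (t-s)^α) :=
      mul_le_mul_of_nonneg_left hsplit (by positivity)
    nlinarith [mul_nonneg (mul_nonneg (mul_nonneg hCs.le hW) hKa) hxα,
      mul_nonneg hKb hxα]
  · -- Riemann sums
    intro t ht0 htT ε hε
    set W : ℝ := Cs β * (Kb + 1) * T with hW
    have hWpos : 0 < W := by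
      have := Cs_pos hβ
      positivity
    refine ⟨min 1 ((ε / W) ^ (1/(β-1))), lt_min one_pos (Real.rpow_pos_of_pos (by positivity) _), ?_⟩
    intro n τ hpart hmesh
    set δ := min 1 ((ε / W) ^ (1/(β-1))) with hδdef
    obtain ⟨hmono, hτ0, hτl⟩ := hpart
    set σ : ℕ → ℝ := fun k => τ ⟨min k n, Nat.lt_succ_of_le (min_le_right k n)⟩ with hσ
    have hcs : ∀ i : Fin n, τ i.castSucc = σ (i:ℕ) := by
      intro i
      simp only [hσ]
      apply congrArg τ
      apply Fin.ext
      simp only [Fin.coe_castSucc]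
      have h := i.isLt
      omega
    have hsc : ∀ i : Fin n, τ i.succ = σ ((i:ℕ)+1) := by
      intro i
      simp only [hσ]
      apply congrArg τ
      apply Fin.ext
      simp only [Fin.val_succ]
      have h := i.isLt
      omega
    have hσ0 : σ 0 = 0 := by
      rw [hσ]
      simp only [Nat.min_eq_left (Nat.zero_le n)]
      exact hτ0
    have hσn : σ n = t := by
      rw [hσ]
      simp only [Nat.min_self]
      exact hτl
    have hσmono : ∀ k, σ k ≤ σ (k+1) := by
      intro k
      apply hmono
      rw [Fin.mk_le_mk]
      omega
    have hσ0le : ∀ k, 0 ≤ σ k := by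
      intro k
      rw [← hτ0]
      exact hmono (Fin.zero_le _)
    have hσleT : ∀ k, σ k ≤ T := by
      intro k
      refine le_trans (le_trans ?_ (le_of_eq hτl)) htT
      apply hmono
      rw [Fin.le_def]
      simp only [Fin.last]
      omega
    have hstep : ∀ k, k < n → σ (k+1) - σ k ≤ δ := by
      intro k hk
      have := hmesh ⟨k, hk⟩
      rw [hcs ⟨k, hk⟩, hsc ⟨k, hk⟩] at this
      exact this
    have hsum : (∑ i : Fin n, Γ (τ i.castSucc) (τ i.succ))
        = ∑ k ∈ Finset.range n, Γ (σ k) (σ (k+1)) := by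
      rw [← Fin.sum_univ_eq_sum_range (fun k => Γ (σ k) (σ (k+1))) n]
      exact Finset.sum_congr rfl (fun i _ => by rw [hcs i, hsc i])
    have htel : (∑ k ∈ Finset.range n, (I (σ (k+1)) - I (σ k))) = I t := by
      rw [Finset.sum_range_sub (fun k => I (σ k)), hσn, hσ0, hI0, sub_zero]
    have hsteptel : (∑ k ∈ Finset.range n, (σ (k+1) - σ k)) = t := by
      rw [Finset.sum_range_sub σ, hσn, hσ0, sub_zero]
    have hdelta : Cs β * Kb * T * δ^(β-1) ≤ ε := by
      have hδ0 : 0 ≤ δ := le_min zero_le_one (Real.rpow_nonneg (by positivity) _)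
      have hδle : δ ≤ (ε / W) ^ (1/(β-1)) := min_le_right _ _
      have h1 : δ^(β-1) ≤ ((ε / W) ^ (1/(β-1)))^(β-1) :=
        Real.rpow_le_rpow hδ0 hδle (by linarith)
      have h2 : ((ε / W) ^ (1/(β-1)))^(β-1) = ε / W := by
        rw [← Real.rpow_mul (by positivity), one_div,
          inv_mul_cancel₀ (by linarith : β - 1 ≠ 0), Real.rpow_one]
      rw [h2] at h1
      have h3 : Cs β * Kb * T ≤ W := by
        rw [hW]
        have := Cs_pos hβ
        nlinarith
      calc Cs β * Kb * T * δ^(β-1) ≤ W * (ε / W) := by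
            apply mul_le_mul h3 h1 (Real.rpow_nonneg hδ0 _)
            positivity
        _ = ε := by field_simp
    rw [hsum]
    have key : (∑ k ∈ Finset.range n, Γ (σ k) (σ (k+1))) - I t
        = ∑ k ∈ Finset.range n, (Γ (σ k) (σ (k+1)) - (I (σ (k+1)) - I (σ k))) := by
      rw [Finset.sum_sub_distrib, htel]
    rw [key]
    calc ‖∑ k ∈ Finset.range n, (Γ (σ k) (σ (k+1)) - (I (σ (k+1)) - I (σ k)))‖
        ≤ ∑ k ∈ Finset.range n, (Cs β * Kb * (δ^(β-1) * (σ (k+1) - σ k))) := by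
          apply norm_sum_le_of_le
          intro k hk
          rw [norm_sub_rev]
          calc ‖(I (σ (k+1)) - I (σ k)) - Γ (σ k) (σ (k+1))‖
              ≤ Cs β * Kb * (σ (k+1) - σ k)^β :=
                hIb (σ k) (σ (k+1)) (hσ0le k) (hσmono k) (hσleT (k+1))
            _ ≤ Cs β * Kb * (δ^(β-1) * (σ (k+1) - σ k)) := by
                apply mul_le_mul_of_nonneg_left _
                  (by have := Cs_pos hβ; positivity)
                exact rpow_le_mul hβ.le (by linarith [hσmono k])
                  (hstep k (Finset.mem_range.mp hk))
      _ = Cs β * Kb * δ^(β-1) * (∑ k ∈ Finset.range n, (σ (k+1) - σ k)) := by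
          rw [← Finset.mul_sum, ← Finset.mul_sum]
          ring
      _ = Cs β * Kb * δ^(β-1) * t := by rw [hsteptel]
      _ ≤ Cs β * Kb * δ^(β-1) * T := by
          apply mul_le_mul_of_nonneg_left htT
          have := Cs_pos hβ
          positivity
      _ = Cs β * Kb * T * δ^(β-1) := by ring
      _ ≤ ε := hdelta
  · -- uniqueness
    intro J hJ0 _ hJb t ht0 htT
    have key : ∀ n : ℕ, 1 ≤ n → ‖J t - I t‖ ≤ 2 * (Cs β * Kb) * t^β * ((n:ℝ))^(1-β) := by
      intro n hn
      have hnpos : (0:ℝ) < n := by exact_mod_cast hn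
      set σ : ℕ → ℝ := fun k => (k:ℝ) * (t / n) with hσ
      have hσ0 : σ 0 = 0 := by simp [hσ]
      have hσn : σ n = t := by
        rw [hσ]
        field_simp
      have hσmono : ∀ k, σ k ≤ σ (k+1) := by
        intro k
        rw [hσ]
        have h1 : (0:ℝ) ≤ t / n := by positivity
        push_cast
        nlinarith
      have hσ0le : ∀ k, 0 ≤ σ k := by
        intro k
        rw [hσ]
        positivity
      have hσleT : ∀ k, k ≤ n → σ k ≤ T := by
        intro k hk
        refine le_trans ?_ htT
        rw [← hσn, hσ]
        have : (k:ℝ) ≤ (n:ℝ) := by exact_mod_cast hk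
        apply mul_le_mul_of_nonneg_right this (by positivity)
      have htel : (∑ k ∈ Finset.range n, ((J (σ (k+1)) - I (σ (k+1))) - (J (σ k) - I (σ k))))
          = J t - I t := by
        rw [Finset.sum_range_sub (fun k => J (σ k) - I (σ k)), hσn, hσ0, hJ0, hI0]
        simp
      rw [← htel]
      have hstepval : ∀ k, σ (k+1) - σ k = t / n := by
        intro k
        rw [hσ]
        push_cast
        ring
      calc ‖∑ k ∈ Finset.range n, ((J (σ (k+1)) - I (σ (k+1))) - (J (σ k) - I (σ k)))‖
          ≤ ∑ k ∈ Finset.range n, (2 * (Cs β * Kb) * (t/n)^β) := by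
            apply norm_sum_le_of_le
            intro k hk
            have hkn : k + 1 ≤ n := Finset.mem_range.mp hk
            have e : (J (σ (k+1)) - I (σ (k+1))) - (J (σ k) - I (σ k))
                = ((J (σ (k+1)) - J (σ k)) - Γ (σ k) (σ (k+1)))
                  - ((I (σ (k+1)) - I (σ k)) - Γ (σ k) (σ (k+1))) := by abel
            rw [e]
            have h1 := hJb (σ k) (σ (k+1)) (hσ0le k) (hσmono k) (hσleT (k+1) hkn)
            have h2 := hIb (σ k) (σ (k+1)) (hσ0le k) (hσmono k) (hσleT (k+1) hkn)
            calc ‖_ - _‖ ≤ ‖(J (σ (k+1)) - J (σ k)) - Γ (σ k) (σ (k+1))‖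
                  + ‖(I (σ (k+1)) - I (σ k)) - Γ (σ k) (σ (k+1))‖ := norm_sub_le _ _
              _ ≤ Cs β * Kb * (σ (k+1) - σ k)^β + Cs β * Kb * (σ (k+1) - σ k)^β :=
                  add_le_add h1 h2
              _ = 2 * (Cs β * Kb) * (t/n)^β := by rw [hstepval]; ring
        _ = (n:ℝ) * (2 * (Cs β * Kb) * (t/n)^β) := by
            rw [Finset.sum_const, Finset.card_range, nsmul_eq_mul]
        _ = 2 * (Cs β * Kb) * t^β * ((n:ℝ))^(1-β) := by
            rw [Real.div_rpow ht0 hnpos.le]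
            have h1 : ((n:ℝ))^(1-β) = (n:ℝ) * ((n:ℝ)^β)⁻¹ := by
              have := Real.rpow_add hnpos 1 (-β)
              rw [show (1:ℝ) + -β = 1 - β by ring, Real.rpow_one,
                Real.rpow_neg hnpos.le] at this
              exact this
            rw [h1]
            field_simp
    have hlim : Tendsto (fun n : ℕ => 2 * (Cs β * Kb) * t^β * ((n:ℝ))^(1-β)) atTop (𝓝 0) := by
      have h1 : Tendsto (fun x : ℝ => x^(-(β-1))) atTop (𝓝 0) :=
        tendsto_rpow_neg_atTop (by linarith)
      have h2 : Tendsto (fun n : ℕ => ((n:ℝ))^(1-β)) atTop (𝓝 0) := by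
        have := h1.comp tendsto_natCast_atTop_atTop (α := ℕ)
        simpa [show -(β-1) = 1-β by ring, Function.comp_def] using this
      have h3 := h2.const_mul (2 * (Cs β * Kb) * t^β)
      simpa using h3
    have hfin : ‖J t - I t‖ ≤ 0 := by
      apply ge_of_tendsto hlim
      filter_upwards [eventually_ge_atTop 1] with n hn
      exact key n hn
    have : J t - I t = 0 := by
      have := norm_le_zero_iff.mp hfin
      exact this
    exact sub_eq_zero.mp this
end
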